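/- arXiv:1312.1250 — 11 statements merged into one kernel-verified Lean document; each statement's English description precedes it below -/
import Mathlib

section
/- Let R be a commutative ring and n ≥ 2 a positive integer. Then the diagonal extension R ⊆ R^n has FCP if and only if R is an Artinian ring. -/
/-- A ring extension `R ⊆ S` (given by the algebra structure) has FCP if every chain
of `R`-subalgebras of `S` is finite. -/
def HasFCP (R S : Type*) [CommRing R] [CommRing S] [Algebra R S] : Prop :=
  ∀ C : Set (Subalgebra R S), IsChain (· ≤ ·) C → C.Finite


section Aux

lemma not_wellFoundedGT_nat : ¬ WellFoundedGT ℕ := fun h =>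
  RelEmbedding.not_wellFounded
    (RelEmbedding.refl ((· > ·) : ℕ → ℕ → Prop)) h.wf

/-- Every chain in a partial order that is well-founded in both directions is finite. -/
lemma IsChain.finite_of_wellFounded {α : Type*} [PartialOrder α] [WellFoundedLT α]
    [WellFoundedGT α] {C : Set α} (hC : IsChain (· ≤ ·) C) : C.Finite := by
  rw [← Set.not_infinite]
  intro hinf
  haveI := hinf.to_subtype
  set f : ℕ → α := fun i => ((Infinite.natEmbedding C) i : α) with hf
  have hmem : ∀ i, f i ∈ C := fun i => ((Infinite.natEmbedding C) i).2
  have hfinj : Function.Injective f :=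
    Subtype.coe_injective.comp (Infinite.natEmbedding C).injective
  haveI : IsTrans α (· < ·) := ⟨fun _ _ _ => lt_trans⟩
  obtain ⟨g, hg | hg⟩ := exists_increasing_or_nonincreasing_subseq (· < ·) f
  · have hsm : StrictMono (f ∘ g) := fun m n h => hg m n h
    exact not_wellFoundedGT_nat hsm.wellFoundedGT
  · have hsa : StrictAnti (f ∘ g) := by
      intro m n h
      have hne : f (g m) ≠ f (g n) := fun e => (h.ne (g.injective (hfinj e)))
      rcases hC.total (hmem (g m)) (hmem (g n)) with hle | hle
      · exact absurd (lt_of_le_of_ne hle hne) (hg m n h)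
      · exact lt_of_le_of_ne hle hne.symm
    exact not_wellFoundedGT_nat hsa.wellFoundedGT

end Aux

section HopkinsLevitzki

variable {R : Type*} [CommRing R]

/-- If `M` is an Artinian module killed by `J` and `R ⧸ J` is semisimple,
then `M` is Noetherian. -/
lemma isNoetherian_of_isTorsionBySet {M : Type*} [AddCommGroup M] [Module R M]
    (J : Ideal R) (hss : IsSemisimpleRing (R ⧸ J)) (htor : Module.IsTorsionBySet R M J)
    [IsArtinian R M] : IsNoetherian R M := by
  letI : Module (R ⧸ J) M := htor.module
  haveI : IsScalarTower R (R ⧸ J) M := htor.isScalarTower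
  let e : Submodule (R ⧸ J) M ≃o Submodule R M :=
    { Submodule.restrictScalarsEmbedding R (R ⧸ J) M with
      invFun := fun p =>
        { carrier := p
          add_mem' := fun ha hb => p.add_mem ha hb
          zero_mem' := p.zero_mem
          smul_mem' := by
            rintro c x hx
            obtain ⟨b, rfl⟩ := Ideal.Quotient.mk_surjective c
            rw [htor.mk_smul]
            exact p.smul_mem b hx }
      left_inv := by intro p; ext x; rfl
      right_inv := by intro p; ext x; rfl }
  haveI : IsArtinian (R ⧸ J) M := e.strictMono.wellFoundedLT
  haveI : IsNoetherian (R ⧸ J) M :=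
    ((IsSemisimpleModule.finite_tfae (R := R ⧸ J) (M := M)).out 2 1).mp ‹_›
  exact isNoetherian_mk (e.symm.strictMono.wellFoundedGT)

lemma isNoetherian_pow_succ_step [IsArtinianRing R] (J : Ideal R)
    (hss : IsSemisimpleRing (R ⧸ J)) (t : ℕ)
    (ih : IsNoetherian R ↥(J ^ (t + 1))) : IsNoetherian R ↥(J ^ t) := by
  set S : Submodule R ↥(J ^ t : Ideal R) :=
    Submodule.comap (J ^ t : Ideal R).subtype (J ^ (t + 1)) with hS
  rw [isNoetherian_iff_submodule_quotient S]
  constructor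
  · exact isNoetherian_of_linearEquiv
      (Submodule.comapSubtypeEquivOfLe (Ideal.pow_le_pow_right t.le_succ)).symm
  · haveI : IsArtinian R (↥(J ^ t : Ideal R) ⧸ S) := inferInstance
    apply isNoetherian_of_isTorsionBySet J hss
    rw [Module.isTorsionBySet_quotient_iff]
    intro x r hr
    show (J ^ t : Ideal R).subtype (r • x) ∈ J ^ (t + 1)
    have : r * (x : R) ∈ J * J ^ t := Ideal.mul_mem_mul hr x.2
    rwa [← pow_succ'] at this

/-- Hopkins–Levitzki for commutative rings: an Artinian commutative ring is Noetherian. -/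
lemma isNoetherianRing_of_isArtinianRing [IsArtinianRing R] : IsNoetherianRing R := by
  set J := (⊥ : Ideal R).jacobson with hJ
  have hss : IsSemisimpleRing (R ⧸ J) := by
    haveI : IsReduced (R ⧸ J) :=
      (Ideal.isRadical_iff_quotient_reduced J).mp (Ideal.isRadical_jacobson ⊥)
    exact IsArtinianRing.isSemisimpleRing_of_isReduced (R ⧸ J)
  obtain ⟨k, hk⟩ := IsArtinianRing.isNilpotent_jacobson_bot (R := R)
  have key : ∀ m, IsNoetherian R ↥(J ^ (k - m)) := by
    intro m
    induction m with
    | zero =>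
      rw [Nat.sub_zero]
      rw [show J ^ k = ⊥ from hk]
      infer_instance
    | succ m ih =>
      rcases le_or_gt k m with h | h
      · rwa [show k - (m + 1) = k - m by omega]
      · have hstep : k - m = (k - (m + 1)) + 1 := by omega
        rw [hstep] at ih
        exact isNoetherian_pow_succ_step J hss _ ih
  have h0 := key k
  rw [Nat.sub_self, pow_zero, Ideal.one_eq_top] at h0
  exact (isNoetherian_top_iff).mp h0

end HopkinsLevitzki

section Diag

variable {R : Type*} [CommRing R] {n : ℕ} [NeZero n]

/-- The subalgebra of `R^n` of tuples which are congruent to their first coordinate mod `I`. -/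
def diagSub (I : Ideal R) : Subalgebra R (Fin n → R) where
  carrier := {f | ∀ i, f i - f 0 ∈ I}
  mul_mem' := by
    intro a b ha hb i
    have h : (a * b) i - (a * b) 0 = a i * (b i - b 0) + b 0 * (a i - a 0) := by
      simp only [Pi.mul_apply]; ring
    rw [h]
    exact I.add_mem (I.mul_mem_left _ (hb i)) (I.mul_mem_left _ (ha i))
  one_mem' := by intro i; simp
  add_mem' := by
    intro a b ha hb i
    have h : (a + b) i - (a + b) 0 = (a i - a 0) + (b i - b 0) := by
      simp only [Pi.add_apply]; ring
    rw [h]; exact I.add_mem (ha i) (hb i)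
  zero_mem' := by intro i; simp
  algebraMap_mem' := by intro r i; simp

lemma diagSub_strictMono (hn : 2 ≤ n) : StrictMono (diagSub (R := R) (n := n)) := by
  intro I J hIJ
  have hle : diagSub (R := R) (n := n) I ≤ diagSub J := fun f hf i => hIJ.le (hf i)
  obtain ⟨j, hjJ, hjI⟩ := SetLike.exists_of_lt hIJ
  refine lt_of_le_of_ne hle (fun he => hjI ?_)
  set v : Fin n → R := fun i => if i = 0 then 0 else j with hv
  have hvJ : v ∈ diagSub (R := R) (n := n) J := by
    intro i
    simp only [hv, if_pos rfl, sub_zero]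
    by_cases h : i = 0
    · simp [h]
    · simpa [h] using hjJ
  have hvI : v ∈ diagSub (R := R) (n := n) I := he ▸ hvJ
  have h1 : (⟨1, by omega⟩ : Fin n) ≠ 0 := by
    intro h; simpa using congrArg Fin.val h
  have := hvI ⟨1, by omega⟩
  simpa [hv, h1] using this

end Diag

/-- Let `R` be a commutative ring and `n ≥ 2`. The diagonal extension `R ⊆ R^n`
has FCP if and only if `R` is an Artinian ring. -/
theorem fcp_diagonal_power_iff_isArtinianRing (R : Type*) [CommRing R] (n : ℕ) (hn : 2 ≤ n) :
    HasFCP R (Fin n → R) ↔ IsArtinianRing R := by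
  haveI : NeZero n := ⟨by omega⟩
  constructor
  · intro hFCP
    rw [isArtinianRing_iff, isArtinian_iff, RelEmbedding.wellFounded_iff_isEmpty]
    refine ⟨fun f => ?_⟩
    have hanti : StrictAnti (fun i => f i) := fun m n h => f.map_rel_iff.mpr h
    set g : ℕ → Subalgebra R (Fin n → R) := fun i => diagSub (f i) with hg
    have hganti : StrictAnti g := fun m n h => diagSub_strictMono hn (hanti h)
    have hchain : IsChain (· ≤ ·) (Set.range g) := by
      rintro _ ⟨i, rfl⟩ _ ⟨j, rfl⟩ hne
      rcases le_total i j with h | h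
      · exact Or.inr (hganti.antitone h)
      · exact Or.inl (hganti.antitone h)
    exact Set.infinite_range_of_injective hganti.injective (hFCP _ hchain)
  · intro hart
    haveI := hart
    haveI : IsNoetherianRing R := isNoetherianRing_of_isArtinianRing
    intro C hC
    have hC' : IsChain (· ≤ ·) (Subalgebra.toSubmodule '' C) := by
      rintro _ ⟨a, ha, rfl⟩ _ ⟨b, hb, rfl⟩ hne
      rcases hC.total ha hb with h | h
      · exact Or.inl ((Subalgebra.toSubmodule (R := R)).monotone h)
      · exact Or.inr ((Subalgebra.toSubmodule (R := R)).monotone h)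
    have hfin : (Subalgebra.toSubmodule '' C).Finite := hC'.finite_of_wellFounded
    exact hfin.of_finite_image (Subalgebra.toSubmodule_injective.injOn)
end

section
/- Let K be a field and n > 1 a positive integer. Then the number of K-subalgebras of K^n (for the diagonal extension K ⊆ K^n) equals the n-th Bell number B_n; in particular K ⊆ K^n has FIP, and moreover K ⊆ K^n is a seminormal extension. -/
open Classical

/-- An extension `R ⊆ S` is seminormal if every `b ∈ S` with `b², b³ ∈ R` lies in `R`. -/
def IsSeminormalExt (R S : Type*) [CommRing R] [CommRing S] [Algebra R S] : Prop :=
  ∀ b : S, b ^ 2 ∈ (algebraMap R S).range → b ^ 3 ∈ (algebraMap R S).range →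
    b ∈ (algebraMap R S).range

/-- The `n`-th Bell number, as the number of equivalence relations on an `n`-element set. -/
noncomputable def bellNumber (n : ℕ) : ℕ := Nat.card (Setoid (Fin n))

section Aux

variable {K : Type*} [Field K] {n : ℕ}

/-- Subalgebra of functions constant on equivalence classes of `s`. -/
def algOfSetoid (K : Type*) [Field K] {n : ℕ} (s : Setoid (Fin n)) :
    Subalgebra K (Fin n → K) where
  carrier := { f | ∀ i j, s.r i j → f i = f j }
  add_mem' := fun hf hg i j hij => by simp [hf i j hij, hg i j hij]
  mul_mem' := fun hf hg i j hij => by simp [hf i j hij, hg i j hij]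
  algebraMap_mem' := fun c i j _ => rfl

/-- Setoid associated to a subalgebra. -/
def setoidOfAlg (A : Subalgebra K (Fin n → K)) : Setoid (Fin n) where
  r i j := ∀ f ∈ A, f i = f j
  iseqv := ⟨fun _ _ _ => rfl, fun h f hf => (h f hf).symm,
    fun h1 h2 f hf => (h1 f hf).trans (h2 f hf)⟩

lemma exists_indicator (A : Subalgebra K (Fin n → K)) (i : Fin n) :
    ∃ p ∈ A, ∀ k, p k = if (∀ f ∈ A, f i = f k) then (1 : K) else 0 := by
  have key : ∀ j, ∃ g, g ∈ A ∧ (¬(∀ f ∈ A, f i = f j) → g i ≠ g j) := by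
    intro j
    by_cases h : ∀ f ∈ A, f i = f j
    · exact ⟨1, A.one_mem, fun hc => absurd h hc⟩
    · push_neg at h
      obtain ⟨g, hg, hne⟩ := h
      exact ⟨g, hg, fun _ => hne⟩
  choose g hgA hgne using key
  set S : Finset (Fin n) := Finset.univ.filter (fun j => ¬(∀ f ∈ A, f i = f j)) with hS
  set h : Fin n → (Fin n → K) :=
    fun j => (g j i - g j j)⁻¹ • (g j - algebraMap K (Fin n → K) (g j j)) with hh
  have hmem : ∀ j, h j ∈ A := fun j =>
    A.smul_mem (A.sub_mem (hgA j) (A.algebraMap_mem _)) _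
  have happ : ∀ j k, h j k = (g j i - g j j)⁻¹ * (g j k - g j j) := by
    intro j k; simp [hh, Pi.algebraMap_apply, Algebra.algebraMap_self_apply]
  refine ⟨∏ j ∈ S, h j, Subalgebra.prod_mem A (fun j _ => hmem j), ?_⟩
  intro k
  rw [Finset.prod_apply]
  by_cases hk : ∀ f ∈ A, f i = f k
  · rw [if_pos hk]
    apply Finset.prod_eq_one
    intro j hj
    have hjS : ¬(∀ f ∈ A, f i = f j) := by
      simpa [hS] using hj
    have hne : g j i ≠ g j j := hgne j hjS
    have : g j k = g j i := (hk (g j) (hgA j)).symm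
    rw [happ, this, inv_mul_cancel₀ (sub_ne_zero.mpr hne)]
  · rw [if_neg hk]
    refine Finset.prod_eq_zero (i := k) (by simpa [hS] using hk) ?_
    rw [happ]
    simp
lemma alg_setoid_alg (A : Subalgebra K (Fin n → K)) :
    algOfSetoid K (setoidOfAlg A) = A := by
  apply le_antisymm
  · intro f hf
    -- f is constant on classes; write it as a combination of indicators
    have hFin : Fintype (Quotient (setoidOfAlg A)) := Fintype.ofFinite _
    choose p hpA hpval using fun i => exists_indicator A i
    have : f = ∑ c : Quotient (setoidOfAlg A), f c.out • p c.out := by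
      funext k
      rw [Finset.sum_apply]
      have hterm : ∀ c : Quotient (setoidOfAlg A),
          (f c.out • p c.out) k = if c = ⟦k⟧ then f k else 0 := by
        intro c
        rw [Pi.smul_apply, hpval]
        by_cases hc : c = ⟦k⟧
        · have hrel : ∀ g ∈ A, g c.out = g k := by
            have : (setoidOfAlg A).r c.out k := by
              subst hc; exact Quotient.mk_out k
            exact this
          rw [if_pos hrel, if_pos hc, smul_eq_mul, mul_one]
          have : f c.out = f k := hf c.out k hrel
          rw [this]
        · have hrel : ¬(∀ g ∈ A, g c.out = g k) := by
            intro hr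
            apply hc
            have : (setoidOfAlg A).r c.out k := hr
            calc c = ⟦c.out⟧ := (Quotient.out_eq c).symm
              _ = ⟦k⟧ := Quotient.sound this
          rw [if_neg hrel, if_neg hc, smul_zero]
      rw [Finset.sum_congr rfl (fun c _ => hterm c)]
      simp
    rw [this]
    exact Subalgebra.sum_mem A (fun c _ => A.smul_mem (hpA c.out) _)
  · intro f hf i j hij
    exact hij f hf

lemma setoid_alg_setoid (s : Setoid (Fin n)) :
    setoidOfAlg (algOfSetoid K s) = s := by
  apply Setoid.ext
  intro i j
  constructor
  · intro h
    -- use the indicator of the class of i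
    have hmem : (fun k => if s.r i k then (1:K) else 0) ∈ algOfSetoid K s := by
      intro a b hab
      dsimp only
      by_cases ha : s.r i a
      · have hib : s.r i b := s.trans ha hab
        rw [if_pos ha, if_pos hib]
      · have hib : ¬ s.r i b := fun hb => ha (s.trans hb (s.symm hab))
        rw [if_neg ha, if_neg hib]
    have h2 : (if s.r i i then (1:K) else 0) = (if s.r i j then 1 else 0) := h _ hmem
    by_contra hij
    have hii : s.r i i := s.refl i
    rw [if_pos hii, if_neg hij] at h2
    exact one_ne_zero h2
  · intro h f hf
    exact hf i j h

noncomputable def subalgEquivSetoid (K : Type*) [Field K] (n : ℕ) :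
    Subalgebra K (Fin n → K) ≃ Setoid (Fin n) where
  toFun := setoidOfAlg
  invFun := algOfSetoid K
  left_inv := alg_setoid_alg
  right_inv := setoid_alg_setoid

instance : Finite (Setoid (Fin n)) := by
  refine Finite.of_injective (fun s => s.r) ?_
  intro s t h
  exact Setoid.ext (fun a b => by rw [show s.r = t.r from h])

end Aux

/-- Let `K` be a field and `n > 1`. The number of `K`-subalgebras of `K^n` equals the
`n`-th Bell number; in particular `K ⊆ K^n` has FIP, and moreover it is seminormal. -/
theorem card_subalgebra_field_pow (K : Type*) [Field K] (n : ℕ) (hn : 1 < n) :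
    Nat.card (Subalgebra K (Fin n → K)) = bellNumber n ∧
      Finite (Subalgebra K (Fin n → K)) ∧
      IsSeminormalExt K (Fin n → K) := by
  refine ⟨Nat.card_congr (subalgEquivSetoid K n), Finite.of_equiv _ (subalgEquivSetoid K n).symm, ?_⟩
  intro b h2 h3
  obtain ⟨c, hc⟩ := h2
  obtain ⟨d, hd⟩ := h3
  have hci : ∀ i, b i ^ 2 = c := fun i => by
    have := congrFun hc i
    simpa [Pi.algebraMap_apply] using this.symm
  have hdi : ∀ i, b i ^ 3 = d := fun i => by
    have := congrFun hd i
    simpa [Pi.algebraMap_apply] using this.symm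
  by_cases hc0 : c = 0
  · refine ⟨0, funext fun i => ?_⟩
    have hb : b i = 0 := by
      have : b i ^ 2 = 0 := hc0 ▸ hci i
      exact pow_eq_zero_iff two_ne_zero |>.mp this
    simp [Pi.algebraMap_apply, hb]
  · refine ⟨d * c⁻¹, funext fun i => ?_⟩
    have h3' : b i * c = d := by
      rw [← hci i, ← hdi i]; ring
    have : b i = d * c⁻¹ := by
      field_simp
      linear_combination h3'
    simp [Pi.algebraMap_apply, this]
end

section
/- Let R be a commutative ring with two proper ideals I and J such that I ∩ J = 0. Then the extension R ⊆ R/I × R/J (given by r ↦ (r mod I, r mod J)) is a Δ₀-extension, and it has FIP if and only if R/(I+J) has only finitely many ideals. -/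
section Aux

variable {R : Type*} [CommRing R] (I J : Ideal R)

/-- Every submodule of `R/I × R/J` containing `1` is closed under multiplication. -/
theorem aux_mul_closed (N : Submodule R ((R ⧸ I) × (R ⧸ J))) (h1 : (1 : (R ⧸ I) × (R ⧸ J)) ∈ N)
    {x y : (R ⧸ I) × (R ⧸ J)} (hx : x ∈ N) (hy : y ∈ N) : x * y ∈ N := by
  obtain ⟨r, hr⟩ := Ideal.Quotient.mk_surjective x.1
  obtain ⟨t, ht⟩ := Ideal.Quotient.mk_surjective y.2
  have key : x * y = r • y + t • (x - r • (1 : (R ⧸ I) × (R ⧸ J))) := by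
    have e1 : ∀ (s : R) (z : (R ⧸ I) × (R ⧸ J)),
        s • z = (Ideal.Quotient.mk I s * z.1, Ideal.Quotient.mk J s * z.2) := by
      intro s z
      ext
      · simp [Algebra.smul_def, Ideal.Quotient.algebraMap_eq]
      · simp [Algebra.smul_def, Ideal.Quotient.algebraMap_eq]
    rw [e1, e1, e1]
    ext
    · simp only [Prod.fst_mul, Prod.fst_add, Prod.fst_sub, Prod.fst_one, hr]
      ring
    · simp only [Prod.snd_mul, Prod.snd_add, Prod.snd_sub, Prod.snd_one, ht]
      ring
  rw [key]
  exact N.add_mem (N.smul_mem r hy) (N.smul_mem t (N.sub_mem hx (N.smul_mem r h1)))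

/-- The ideal of `R` attached to a subalgebra `T` of `R/I × R/J`. -/
def auxIdeal (T : Subalgebra R ((R ⧸ I) × (R ⧸ J))) : Ideal R where
  carrier := {r : R | ((0 : R ⧸ I), Ideal.Quotient.mk J r) ∈ T}
  add_mem' {a b} ha hb := by
    have := T.add_mem ha hb
    simpa using this
  zero_mem' := by
    show ((0 : R ⧸ I), Ideal.Quotient.mk J 0) ∈ T
    rw [map_zero]
    exact T.zero_mem
  smul_mem' s r hr := by
    have := (Subalgebra.toSubmodule T).smul_mem s hr
    have e : s • (((0 : R ⧸ I), Ideal.Quotient.mk J r) : (R ⧸ I) × (R ⧸ J))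
        = ((0 : R ⧸ I), Ideal.Quotient.mk J (s * r)) := by
      ext
      · simp [Algebra.smul_def, Ideal.Quotient.algebraMap_eq]
      · simp [Algebra.smul_def, Ideal.Quotient.algebraMap_eq, map_mul]
    rw [e] at this
    exact this

theorem auxIdeal_le (T : Subalgebra R ((R ⧸ I) × (R ⧸ J))) : I + J ≤ auxIdeal I J T := by
  rw [Ideal.add_eq_sup, sup_le_iff]
  constructor
  · intro i hi
    have h := T.algebraMap_mem i
    have e : algebraMap R ((R ⧸ I) × (R ⧸ J)) i
        = ((0 : R ⧸ I), Ideal.Quotient.mk J i) := by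
      ext
      · simpa [Ideal.Quotient.algebraMap_eq] using (Ideal.Quotient.eq_zero_iff_mem).2 hi
      · simp [Ideal.Quotient.algebraMap_eq]
    rw [e] at h
    exact h
  · intro j hj
    show ((0 : R ⧸ I), Ideal.Quotient.mk J j) ∈ T
    have : Ideal.Quotient.mk J j = 0 := (Ideal.Quotient.eq_zero_iff_mem).2 hj
    rw [this]
    exact T.zero_mem

theorem mem_of_auxIdeal_eq (T T' : Subalgebra R ((R ⧸ I) × (R ⧸ J)))
    (h : auxIdeal I J T = auxIdeal I J T') {x : (R ⧸ I) × (R ⧸ J)} (hx : x ∈ T) : x ∈ T' := by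
  obtain ⟨r, hr⟩ := Ideal.Quotient.mk_surjective x.1
  obtain ⟨s, hs⟩ := Ideal.Quotient.mk_surjective (x.2 - Ideal.Quotient.mk J r)
  have hxr : x - algebraMap R ((R ⧸ I) × (R ⧸ J)) r
      = ((0 : R ⧸ I), Ideal.Quotient.mk J s) := by
    ext
    · simp [Ideal.Quotient.algebraMap_eq, hr]
    · simp [Ideal.Quotient.algebraMap_eq, hs]
  have hsT : s ∈ auxIdeal I J T := by
    show ((0 : R ⧸ I), Ideal.Quotient.mk J s) ∈ T
    rw [← hxr]
    exact T.sub_mem hx (T.algebraMap_mem r)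
  rw [h] at hsT
  have : x = (x - algebraMap R ((R ⧸ I) × (R ⧸ J)) r) + algebraMap R ((R ⧸ I) × (R ⧸ J)) r := by
    ring
  rw [this, hxr]
  exact T'.add_mem hsT (T'.algebraMap_mem r)

end Aux

/-- Let `I`, `J` be proper ideals of `R` with `I ∩ J = 0`. Then the extension
`R ⊆ R/I × R/J` is a Δ₀-extension (every `R`-submodule of `R/I × R/J` containing `R`,
equivalently containing `1`, is an `R`-subalgebra), and it has FIP if and only if
`R/(I+J)` has only finitely many ideals. -/
theorem delta0_and_fip_quotient_pair (R : Type*) [CommRing R] (I J : Ideal R)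
    (hI : I ≠ ⊤) (hJ : J ≠ ⊤) (hIJ : I ⊓ J = ⊥) :
    (∀ N : Submodule R ((R ⧸ I) × (R ⧸ J)), (1 : (R ⧸ I) × (R ⧸ J)) ∈ N →
        ∃ T : Subalgebra R ((R ⧸ I) × (R ⧸ J)), Subalgebra.toSubmodule T = N) ∧
      (Finite (Subalgebra R ((R ⧸ I) × (R ⧸ J))) ↔ Finite (Ideal (R ⧸ (I + J)))) := by
  constructor
  · intro N h1
    exact ⟨N.toSubalgebra h1 (fun x y hx hy => aux_mul_closed I J N h1 hx hy),
      N.toSubalgebra_toSubmodule h1 _⟩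
  · set φ₁ : R ⧸ I →+* R ⧸ (I + J) :=
      Ideal.Quotient.factor (S := I) (T := I + J) (by rw [Ideal.add_eq_sup]; exact le_sup_left) with hφ₁
    set φ₂ : R ⧸ J →+* R ⧸ (I + J) :=
      Ideal.Quotient.factor (S := J) (T := I + J) (by rw [Ideal.add_eq_sup]; exact le_sup_right) with hφ₂
    -- the injection from ideals of `R/(I+J)` to subalgebras
    set f : Ideal (R ⧸ (I + J)) → Subalgebra R ((R ⧸ I) × (R ⧸ J)) := fun K =>
      Submodule.toSubalgebra
        { carrier := {x : (R ⧸ I) × (R ⧸ J) | φ₁ x.1 - φ₂ x.2 ∈ K}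
          add_mem' := by
            intro a b ha hb
            show φ₁ (a + b).1 - φ₂ (a + b).2 ∈ K
            have e : φ₁ (a + b).1 - φ₂ (a + b).2 = (φ₁ a.1 - φ₂ a.2) + (φ₁ b.1 - φ₂ b.2) := by
              simp only [Prod.fst_add, Prod.snd_add, map_add]; ring
            rw [e]
            exact K.add_mem ha hb
          zero_mem' := by simp
          smul_mem' := by
            intro s x hx
            have e : φ₁ (s • x).1 - φ₂ (s • x).2
                = Ideal.Quotient.mk (I + J) s * (φ₁ x.1 - φ₂ x.2) := by
              have h1 : (s • x).1 = Ideal.Quotient.mk I s * x.1 := by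
                simp [Algebra.smul_def, Ideal.Quotient.algebraMap_eq]
              have h2 : (s • x).2 = Ideal.Quotient.mk J s * x.2 := by
                simp [Algebra.smul_def, Ideal.Quotient.algebraMap_eq]
              rw [h1, h2, map_mul, map_mul, hφ₁, hφ₂, Ideal.Quotient.factor_mk,
                Ideal.Quotient.factor_mk]
              ring
            show φ₁ (s • x).1 - φ₂ (s • x).2 ∈ K
            rw [e]
            exact K.mul_mem_left _ hx }
        (by show φ₁ 1 - φ₂ 1 ∈ K; simp)
        (by
          intro x y hx hy
          show φ₁ (x * y).1 - φ₂ (x * y).2 ∈ K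
          have : φ₁ (x * y).1 - φ₂ (x * y).2
              = φ₁ x.1 * (φ₁ y.1 - φ₂ y.2) + (φ₁ x.1 - φ₂ x.2) * φ₂ y.2 := by
            simp only [Prod.fst_mul, Prod.snd_mul, map_mul]; ring
          rw [this]
          exact K.add_mem (K.mul_mem_left _ hy) (K.mul_mem_right _ hx)) with hf
    have hfinj : Function.Injective f := by
      intro K₁ K₂ h
      ext k
      obtain ⟨r, hr⟩ := Ideal.Quotient.mk_surjective k
      have hmem : ∀ K : Ideal (R ⧸ (I + J)),
          k ∈ K ↔ ((Ideal.Quotient.mk I r, (0 : R ⧸ J)) : (R ⧸ I) × (R ⧸ J)) ∈ f K := by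
        intro K
        show k ∈ K ↔ φ₁ (Ideal.Quotient.mk I r) - φ₂ 0 ∈ K
        rw [hφ₁, Ideal.Quotient.factor_mk, map_zero, sub_zero, hr]
      rw [hmem K₁, hmem K₂, h]
    have hginj : ∀ T T' : Subalgebra R ((R ⧸ I) × (R ⧸ J)),
        Ideal.map (Ideal.Quotient.mk (I + J)) (auxIdeal I J T)
          = Ideal.map (Ideal.Quotient.mk (I + J)) (auxIdeal I J T') → T = T' := by
      intro T T' h
      have hker : RingHom.ker (Ideal.Quotient.mk (I + J)) = I + J := Ideal.mk_ker
      have hB : auxIdeal I J T = auxIdeal I J T' := by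
        have c1 := congrArg (Ideal.comap (Ideal.Quotient.mk (I + J))) h
        rwa [Ideal.comap_map_of_surjective _ Ideal.Quotient.mk_surjective,
          Ideal.comap_map_of_surjective _ Ideal.Quotient.mk_surjective,
          ← RingHom.ker_eq_comap_bot, hker,
          sup_eq_left.2 (auxIdeal_le I J T), sup_eq_left.2 (auxIdeal_le I J T')] at c1
      ext x
      exact ⟨fun hx => mem_of_auxIdeal_eq I J T T' hB hx,
        fun hx => mem_of_auxIdeal_eq I J T' T hB.symm hx⟩
    constructor
    · intro h
      exact Finite.of_injective f hfinj
    · intro h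
      exact Finite.of_injective
        (fun T => Ideal.map (Ideal.Quotient.mk (I + J)) (auxIdeal I J T))
        (fun T T' => hginj T T')
end

section
/- Let (R,M) be a quasi-local ring with R/M infinite, and let I, J be ideals of R with I ∩ J = 0. (1) If I + J = R, then |[R, R/I × R/J]| = 1. (2) If I + J ≠ R and S := R/(I+J) is a SPIR whose maximal ideal has nilpotency index p (the least p > 0 with p-th power zero), then |[R, R/I × R/J]| = p + 1. In particular, if (R,M) is itself a SPIR whose maximal ideal has nilpotency index q, then |[R, R²]| = q + 1. -/
section Key

variable {R A B T : Type*} [CommRing R] [CommRing A] [CommRing B] [CommRing T]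
  [Algebra R A] [Algebra R B] [Algebra R T]

/-- The subalgebra of `A × B` attached to an ideal `K` of `T`. -/
def idealToSubalgebra (qA : A →ₐ[R] T) (qB : B →ₐ[R] T) (K : Ideal T) :
    Subalgebra R (A × B) where
  carrier := {z | qA z.1 - qB z.2 ∈ K}
  mul_mem' := by
    intro a b ha hb
    show qA (a * b).1 - qB (a * b).2 ∈ K
    rw [Prod.fst_mul, Prod.snd_mul, map_mul, map_mul]
    have h : qA a.1 * qA b.1 - qB a.2 * qB b.2
        = qA a.1 * (qA b.1 - qB b.2) + qB b.2 * (qA a.1 - qB a.2) := by ring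
    rw [h]
    exact K.add_mem (K.mul_mem_left _ hb) (K.mul_mem_left _ ha)
  add_mem' := by
    intro a b ha hb
    show qA (a + b).1 - qB (a + b).2 ∈ K
    rw [Prod.fst_add, Prod.snd_add, map_add, map_add]
    have h : qA a.1 + qA b.1 - (qB a.2 + qB b.2)
        = (qA a.1 - qB a.2) + (qA b.1 - qB b.2) := by ring
    rw [h]
    exact K.add_mem ha hb
  algebraMap_mem' := by
    intro r
    show qA (algebraMap R (A × B) r).1 - qB (algebraMap R (A × B) r).2 ∈ K
    rw [Prod.algebraMap_apply]
    show qA (algebraMap R A r) - qB (algebraMap R B r) ∈ K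
    rw [qA.commutes, qB.commutes, sub_self]
    exact K.zero_mem

theorem mem_idealToSubalgebra (qA : A →ₐ[R] T) (qB : B →ₐ[R] T) (K : Ideal T) (z : A × B) :
    z ∈ idealToSubalgebra qA qB K ↔ qA z.1 - qB z.2 ∈ K := Iff.rfl

/-- The ideal of `T` attached to a subalgebra of `A × B`. -/
def subalgebraToIdeal (qA : A →ₐ[R] T) (qB : B →ₐ[R] T)
    (hT : Function.Surjective (algebraMap R T)) (S : Subalgebra R (A × B)) : Ideal T where
  carrier := (fun z : A × B => qA z.1 - qB z.2) '' (S : Set (A × B))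
  add_mem' := by
    rintro a b ⟨z, hz, rfl⟩ ⟨w, hw, rfl⟩
    refine ⟨z + w, S.add_mem hz hw, ?_⟩
    show qA (z + w).1 - qB (z + w).2 = _
    rw [Prod.fst_add, Prod.snd_add, map_add, map_add]
    ring
  zero_mem' := by
    refine ⟨0, S.zero_mem, ?_⟩
    show qA (0 : A × B).1 - qB (0 : A × B).2 = 0
    rw [Prod.fst_zero, Prod.snd_zero, map_zero, map_zero, sub_zero]
  smul_mem' := by
    rintro t x ⟨z, hz, rfl⟩
    obtain ⟨r, hr⟩ := hT t
    refine ⟨algebraMap R (A × B) r * z, S.mul_mem (S.algebraMap_mem r) hz, ?_⟩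
    show qA (algebraMap R (A × B) r * z).1 - qB (algebraMap R (A × B) r * z).2 = _
    rw [Prod.fst_mul, Prod.snd_mul, Prod.algebraMap_apply]
    show qA (algebraMap R A r * z.1) - qB (algebraMap R B r * z.2) = _
    rw [map_mul, map_mul, qA.commutes, qB.commutes, hr, smul_eq_mul]
    ring

theorem card_subalgebra_eq_card_ideal (qA : A →ₐ[R] T) (qB : B →ₐ[R] T)
    (hT : Function.Surjective (algebraMap R T))
    (hstar : ∀ u v, qA u = qB v → ∃ r, algebraMap R A r = u ∧ algebraMap R B r = v) :
    Nat.card (Subalgebra R (A × B)) = Nat.card (Ideal T) := by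
  refine (Nat.card_eq_of_bijective (idealToSubalgebra qA qB) ⟨?_, ?_⟩).symm
  · -- injective
    have key : ∀ K₁ K₂ : Ideal T, idealToSubalgebra qA qB K₁ = idealToSubalgebra qA qB K₂ →
        K₁ ≤ K₂ := by
      intro K₁ K₂ hK k hk
      obtain ⟨r, hr⟩ := hT k
      have hz : ((algebraMap R A r, (0 : B)) : A × B) ∈ idealToSubalgebra qA qB K₁ := by
        rw [mem_idealToSubalgebra]
        show qA (algebraMap R A r) - qB 0 ∈ K₁
        rw [qA.commutes, hr, map_zero, sub_zero]
        exact hk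
      rw [hK, mem_idealToSubalgebra] at hz
      have : qA (algebraMap R A r) - qB 0 ∈ K₂ := hz
      rwa [qA.commutes, hr, map_zero, sub_zero] at this
    intro K K' h
    exact le_antisymm (key _ _ h) (key _ _ h.symm)
  · -- surjective
    intro S
    refine ⟨subalgebraToIdeal qA qB hT S, ?_⟩
    apply le_antisymm
    · intro z hz
      rw [mem_idealToSubalgebra] at hz
      obtain ⟨w, hw, hww⟩ := hz
      have hww' : qA w.1 - qB w.2 = qA z.1 - qB z.2 := hww
      have heq : qA (z.1 - w.1) = qB (z.2 - w.2) := by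
        rw [map_sub, map_sub]
        linear_combination -hww'
      obtain ⟨r, hr1, hr2⟩ := hstar _ _ heq
      have hzw : z = algebraMap R (A × B) r + w := by
        rw [Prod.algebraMap_apply]
        refine Prod.ext ?_ ?_
        · show z.1 = ((algebraMap R A r, algebraMap R B r) + w).1
          rw [Prod.fst_add]
          show z.1 = algebraMap R A r + w.1
          rw [hr1]; ring
        · show z.2 = ((algebraMap R A r, algebraMap R B r) + w).2
          rw [Prod.snd_add]
          show z.2 = algebraMap R B r + w.2
          rw [hr2]; ring
      rw [hzw]
      exact S.add_mem (S.algebraMap_mem r) hw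
    · intro z hz
      rw [mem_idealToSubalgebra]
      exact ⟨z, hz, rfl⟩

end Key

/-- `(R, M)` is a special principal ideal ring (SPIR): a principal ideal ring, not a field,
whose unique nonzero prime ideal is `M`, with `M` nilpotent. -/
def IsSPIR (R : Type*) [CommRing R] (M : Ideal R) : Prop :=
  IsPrincipalIdealRing R ∧ ¬ IsField R ∧ M.IsPrime ∧ M ≠ ⊥ ∧
    (∀ P : Ideal R, P.IsPrime → P ≠ ⊥ → P = M) ∧ ∃ p : ℕ, 0 < p ∧ M ^ p = ⊥

/-- A SPIR with nilpotency index `p` has exactly `p + 1` ideals. -/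
theorem spir_card_ideal {T : Type*} [CommRing T] {M : Ideal T} (h : IsSPIR T M)
    {p : ℕ} (hpow : M ^ p = ⊥) (hmin : ∀ q, 0 < q → q < p → M ^ q ≠ ⊥) :
    Nat.card (Ideal T) = p + 1 := by
  classical
  obtain ⟨hPIR, hnf, hprime, hne, huniq, -⟩ := h
  -- all powers below p are nonzero
  have hnz : ∀ i, i < p → M ^ i ≠ ⊥ := by
    intro i hi
    rcases Nat.eq_zero_or_pos i with rfl | hi0
    · rw [pow_zero, Ideal.one_eq_top]
      intro htop
      exact hne (le_antisymm (htop ▸ (le_top : M ≤ ⊤)) bot_le)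
    · exact hmin i hi0 hi
  -- injectivity of powers up to p
  have inj : ∀ i j : ℕ, i ≤ p → j ≤ p → M ^ i = M ^ j → i = j := by
    have main : ∀ i j : ℕ, i < j → j ≤ p → M ^ i = M ^ j → False := by
      intro i j hij hjp heq
      have step : ∀ n : ℕ, M ^ (i + n * (j - i)) = M ^ i := by
        intro n
        induction n with
        | zero => simp
        | succ n ih =>
          have harith : i + (n + 1) * (j - i) = (i + n * (j - i)) + (j - i) := by ring
          rw [harith, pow_add, ih, ← pow_add]
          have h2 : i + (j - i) = j := by omega
          rw [h2, ← heq]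
      have hbig : p ≤ i + p * (j - i) := by
        have h1 : 1 ≤ j - i := by omega
        calc p = p * 1 := (mul_one p).symm
        _ ≤ p * (j - i) := Nat.mul_le_mul_left p h1
        _ ≤ i + p * (j - i) := Nat.le_add_left _ _
      have hle : M ^ i ≤ ⊥ := by
        rw [← step p, ← hpow]
        exact Ideal.pow_le_pow_right hbig
      exact hnz i (lt_of_lt_of_le hij hjp) (le_antisymm hle bot_le)
    intro i j hi hj heq
    rcases lt_trichotomy i j with hlt | heq' | hlt
    · exact absurd heq (fun e => main i j hlt hj e)
    · exact heq'
    · exact absurd heq.symm (fun e => main j i hlt hi e)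
  -- T is nontrivial
  obtain ⟨x0, hx0M, hx0⟩ := Submodule.exists_mem_ne_zero_of_ne_bot hne
  haveI : Nontrivial T := nontrivial_of_ne x0 0 hx0
  -- M is maximal and T is local with maximal ideal M
  have hMmax : M.IsMaximal := by
    obtain ⟨N, hN, hMN⟩ := Ideal.exists_le_maximal M hprime.ne_top
    have hNne : N ≠ ⊥ := by
      intro hNb
      exact hne (le_antisymm (hNb ▸ hMN) bot_le)
    rwa [← huniq N hN.isPrime hNne]
  haveI hloc : IsLocalRing T := by
    refine IsLocalRing.of_unique_max_ideal ⟨M, hMmax, ?_⟩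
    intro N hN
    have hNne : N ≠ ⊥ := by
      rintro rfl
      obtain ⟨I0, hIb, hIt⟩ := Ring.not_isField_iff_exists_ideal_bot_lt_and_lt_top.mp hnf
      exact (lt_irrefl (⊤ : Ideal T)) (hN.out.2 I0 hIb ▸ hIt)
    exact huniq N hN.isPrime hNne
  have hMeq : M = IsLocalRing.maximalIdeal T := IsLocalRing.eq_maximalIdeal hMmax
  -- the counting bijection
  have hbij : Function.Bijective (fun i : Fin (p + 1) => M ^ (i : ℕ)) := by
    constructor
    · intro i j hij
      exact Fin.ext (inj i j (Nat.lt_succ_iff.mp i.isLt) (Nat.lt_succ_iff.mp j.isLt) hij)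
    · intro K
      obtain ⟨x, hxK0⟩ := (hPIR.principal K).principal
      have hxK : K = Ideal.span {x} := hxK0
      by_cases hx : x = 0
      · refine ⟨⟨p, Nat.lt_succ_self p⟩, ?_⟩
        show M ^ p = K
        rw [hpow, hxK, hx]
        exact (Ideal.span_singleton_eq_bot.mpr rfl).symm
      · -- find the largest i with x ∈ M ^ i
        set P : ℕ → Prop := fun n => x ∈ M ^ n with hP
        have hP0 : P 0 := by simp [hP]
        set i := Nat.findGreatest P p with hi
        have hxi : x ∈ M ^ i := Nat.findGreatest_spec (Nat.zero_le p) hP0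
        have hip : i ≤ p := Nat.findGreatest_le p
        have hiplt : i < p := by
          rcases lt_or_eq_of_le hip with h' | h'
          · exact h'
          · exfalso
            apply hx
            have hb : x ∈ M ^ p := h' ▸ hxi
            rwa [hpow, Ideal.mem_bot] at hb
        have hxsucc : x ∉ M ^ (i + 1) :=
          Nat.findGreatest_is_greatest (Nat.lt_succ_self i) (by omega)
        obtain ⟨m, hm0⟩ := (hPIR.principal M).principal
        have hm : M = Ideal.span {m} := hm0
        have hMi : M ^ i = Ideal.span {m ^ i} := by
          rw [hm, Ideal.span_singleton_pow]
        have hxi' : x ∈ Ideal.span {m ^ i} := hMi ▸ hxi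
        obtain ⟨c, hc⟩ := Ideal.mem_span_singleton'.mp hxi'
        have hmi : m ^ i ∈ M ^ i := by
          rw [hMi]
          exact Ideal.subset_span rfl
        have hcM : c ∉ M := by
          intro hcM
          apply hxsucc
          have hmem : m ^ i * c ∈ M ^ i * M := Ideal.mul_mem_mul hmi hcM
          have hx2 : x ∈ M ^ i * M := by rw [← hc, mul_comm c (m ^ i)]; exact hmem
          rwa [← pow_succ] at hx2
        have hcu : IsUnit c := by
          by_contra hcu
          exact hcM (hMeq ▸ (IsLocalRing.mem_maximalIdeal c).mpr hcu)
        obtain ⟨u, rfl⟩ := hcu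
        refine ⟨⟨i, by omega⟩, ?_⟩
        show M ^ i = K
        rw [hxK, hMi]
        apply le_antisymm
        · rw [Ideal.span_singleton_le_span_singleton]
          refine ⟨(↑u⁻¹ : T), ?_⟩
          rw [← hc, mul_comm (↑u : T) (m ^ i), mul_assoc, Units.mul_inv, mul_one]
        · rw [Ideal.span_singleton_le_span_singleton]
          exact ⟨(↑u : T), by rw [← hc]; ring⟩
  exact Nat.card_eq_of_equiv_fin ((Equiv.ofBijective _ hbij).symm)

section Main

variable {R : Type*} [CommRing R]

/-- Quotient factor map as an algebra homomorphism. -/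
def qfacAlg (I K : Ideal R) (h : I ≤ K) : (R ⧸ I) →ₐ[R] (R ⧸ K) :=
  { Ideal.Quotient.factor h with
    commutes' := fun r => by
      simp [Ideal.Quotient.algebraMap_eq, Ideal.Quotient.factor_mk] }

theorem qfacAlg_mk (I K : Ideal R) (h : I ≤ K) (r : R) :
    qfacAlg I K h (Ideal.Quotient.mk I r) = Ideal.Quotient.mk K r :=
  Ideal.Quotient.factor_mk h r

theorem card_subalgebra_pair (I J : Ideal R) :
    Nat.card (Subalgebra R ((R ⧸ I) × (R ⧸ J))) = Nat.card (Ideal (R ⧸ (I + J))) := by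
  have hIle : I ≤ I + J := by
    rw [Submodule.add_eq_sup]; exact le_sup_left
  have hJle : J ≤ I + J := by
    rw [Submodule.add_eq_sup]; exact le_sup_right
  refine card_subalgebra_eq_card_ideal (qfacAlg I (I + J) hIle) (qfacAlg J (I + J) hJle)
    ?_ ?_
  · rw [Ideal.Quotient.algebraMap_eq]
    exact Ideal.Quotient.mk_surjective
  · intro u v huv
    obtain ⟨r, rfl⟩ := Ideal.Quotient.mk_surjective u
    obtain ⟨s, rfl⟩ := Ideal.Quotient.mk_surjective v
    rw [qfacAlg_mk, qfacAlg_mk] at huv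
    have hsub : r - s ∈ I + J := Ideal.Quotient.eq.mp huv
    rw [Submodule.add_eq_sup] at hsub
    obtain ⟨i, hiI, j, hjJ, hij⟩ := Submodule.mem_sup.mp hsub
    refine ⟨r - i, ?_, ?_⟩
    · rw [Ideal.Quotient.algebraMap_eq, Ideal.Quotient.eq]
      have hdiff : (r - i) - r = -i := by ring
      rw [hdiff]
      exact I.neg_mem hiI
    · rw [Ideal.Quotient.algebraMap_eq, Ideal.Quotient.eq]
      have hdiff : (r - i) - s = j := by linear_combination -hij
      rw [hdiff]
      exact hjJ

end Main

/-- Let `(R, M)` be a quasi-local ring with infinite residue field and `I ∩ J = 0`.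
(1) If `I + J = R` then `R ⊆ R/I × R/J` has exactly one intermediate algebra.
(2) If `I + J ≠ R` and `R/(I+J)` is a SPIR whose maximal ideal has nilpotency index `p`,
then there are exactly `p + 1` intermediate algebras.
In particular, if `(R, M)` is itself a SPIR with nilpotency index `q`, then
`|[R, R²]| = q + 1`. -/
theorem card_subalgebra_quotient_pair (R : Type*) [CommRing R] [IsLocalRing R]
    (hres : Infinite (R ⧸ IsLocalRing.maximalIdeal R))
    (I J : Ideal R) (hIJ : I ⊓ J = ⊥) :
    (I + J = ⊤ → Nat.card (Subalgebra R ((R ⧸ I) × (R ⧸ J))) = 1) ∧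
      (I + J ≠ ⊤ → ∀ (M' : Ideal (R ⧸ (I + J))) (p : ℕ), IsSPIR (R ⧸ (I + J)) M' →
        0 < p → M' ^ p = ⊥ → (∀ q : ℕ, 0 < q → q < p → M' ^ q ≠ ⊥) →
        Nat.card (Subalgebra R ((R ⧸ I) × (R ⧸ J))) = p + 1) ∧
      (∀ q : ℕ, IsSPIR R (IsLocalRing.maximalIdeal R) → 0 < q →
        IsLocalRing.maximalIdeal R ^ q = ⊥ →
        (∀ m : ℕ, 0 < m → m < q → IsLocalRing.maximalIdeal R ^ m ≠ ⊥) →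
        Nat.card (Subalgebra R (R × R)) = q + 1) := by
  refine ⟨?_, ?_, ?_⟩
  · -- (1) I + J = ⊤
    intro htop
    rw [card_subalgebra_pair I J]
    haveI hss : Subsingleton (R ⧸ (I + J)) := Ideal.Quotient.subsingleton_iff.mpr htop
    have hall : ∀ K : Ideal (R ⧸ (I + J)), K = ⊥ := by
      intro K
      ext x
      rw [Subsingleton.elim x 0]
      simp
    rw [Nat.card_eq_one_iff_unique]
    exact ⟨⟨fun K K' => (hall K).trans (hall K').symm⟩, ⟨⊥⟩⟩
  · -- (2) SPIR quotient
    intro _ M' p hSPIR _ hpow hmin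
    rw [card_subalgebra_pair I J]
    exact spir_card_ideal hSPIR hpow hmin
  · -- (3) R itself a SPIR
    intro q hSPIR _ hpow hmin
    have hcard : Nat.card (Subalgebra R (R × R)) = Nat.card (Ideal R) := by
      refine card_subalgebra_eq_card_ideal (AlgHom.id R R) (AlgHom.id R R) ?_ ?_
      · intro x
        exact ⟨x, by simp⟩
      · intro u v huv
        refine ⟨u, by simp, ?_⟩
        have : u = v := huv
        rw [← this]
        simp
    rw [hcard]
    exact spir_card_ideal hSPIR hpow hmin
end

section
/- Let R be a commutative ring and {I₁,…,Iₙ}, with n > 2, a separating family of ideals of R. Then the extension R ⊆ ∏_{j=1}^n (R/I_j) is a minimal extension if and only if the following condition (†) holds: there exist j₀ ≠ k₀ in {1,…,n} such that I_{j₀} + I_{k₀} is a maximal ideal of R and I_j + I_k = R for every other pair (j,k) with j ≠ k. Moreover, if (†) holds, then I_j + ∩_{k≠j} I_k = ∩_{k≠j} (I_j + I_k) for each j ∈ {1,…,n}. -/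
/-- Condition (†) for a family of ideals: there is a pair `j₀ ≠ k₀` with `I j₀ + I k₀`
maximal, while `I j + I k = R` for every other pair of distinct indices. -/
def DaggerCond {R : Type*} [CommRing R] {n : ℕ} (I : Fin n → Ideal R) : Prop :=
  ∃ j₀ k₀ : Fin n, j₀ ≠ k₀ ∧ (I j₀ + I k₀).IsMaximal ∧
    ∀ j k : Fin n, j ≠ k → ({j, k} : Finset (Fin n)) ≠ {j₀, k₀} → I j + I k = ⊤


section Aux

variable {R : Type*} [CommRing R] {n : ℕ} (I : Fin n → Ideal R)

private lemma memBot {x : ∀ j, R ⧸ I j} :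
    x ∈ (⊥ : Subalgebra R (∀ j, R ⧸ I j)) ↔ ∃ r : R, ∀ j, Ideal.Quotient.mk (I j) r = x j := by
  rw [Algebra.mem_bot]
  constructor
  · rintro ⟨r, rfl⟩
    exact ⟨r, fun j => rfl⟩
  · rintro ⟨r, h⟩
    exact ⟨r, funext h⟩

private def projQ (j : Fin n) (K : Ideal R) (h : I j ≤ K) : (∀ i, R ⧸ I i) →ₐ[R] R ⧸ K :=
  { toRingHom := (Ideal.Quotient.factor h).comp (Pi.evalRingHom (fun i => R ⧸ I i) j)
    commutes' := fun r => by
      simp [Ideal.Quotient.algebraMap_eq, Ideal.Quotient.factor_mk] }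

private lemma projQ_apply (j : Fin n) (K : Ideal R) (h : I j ≤ K) (x : ∀ i, R ⧸ I i) :
    projQ I j K h x = Ideal.Quotient.factor h (x j) := rfl

private lemma single_mem_bot (j : Fin n) (h : ∀ k, k ≠ j → I j ⊔ I k = ⊤) (z : R ⧸ I j) :
    Pi.single j z ∈ (⊥ : Subalgebra R (∀ i, R ⧸ I i)) := by
  obtain ⟨a, rfl⟩ := Ideal.Quotient.mk_surjective z
  have htop : I j ⊔ ⨅ k ∈ Finset.univ.erase j, I k = ⊤ :=
    Ideal.sup_iInf_eq_top fun k hk => h k (Finset.ne_of_mem_erase hk)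
  have h1 : (1 : R) ∈ I j ⊔ ⨅ k ∈ Finset.univ.erase j, I k := by
    rw [htop]; exact Submodule.mem_top
  obtain ⟨p, hp, q, hq, hpq⟩ := Submodule.mem_sup.mp h1
  simp only [Submodule.mem_iInf] at hq
  rw [memBot]
  refine ⟨q * a, fun k => ?_⟩
  rcases eq_or_ne k j with rfl | hk
  · rw [Pi.single_eq_same, Ideal.Quotient.eq]
    have he : q * a - a = -(p * a) := by linear_combination a * hpq
    rw [he]
    exact neg_mem ((I k).mul_mem_right a hp)
  · rw [Pi.single_eq_of_ne hk, Ideal.Quotient.eq_zero_iff_mem]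
    exact (I k).mul_mem_right a (hq k (Finset.mem_erase.mpr ⟨hk, Finset.mem_univ k⟩))

private lemma pair_mem_bot (j0 k0 : Fin n) (hne : j0 ≠ k0)
    (hcom : ∀ k, k ≠ j0 → k ≠ k0 → I j0 ⊔ I k = ⊤ ∧ I k0 ⊔ I k = ⊤)
    (a b : R) (hab : a - b ∈ I j0 ⊔ I k0) :
    Pi.single j0 (Ideal.Quotient.mk (I j0) a) + Pi.single k0 (Ideal.Quotient.mk (I k0) b)
      ∈ (⊥ : Subalgebra R (∀ i, R ⧸ I i)) := by
  have hinf : ∀ k ∈ (Finset.univ.erase j0).erase k0, (I j0 ⊓ I k0) ⊔ I k = ⊤ := by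
    intro k hk
    have hk0 : k ≠ k0 := (Finset.mem_erase.mp hk).1
    have hj0 : k ≠ j0 := (Finset.mem_erase.mp (Finset.mem_erase.mp hk).2).1
    obtain ⟨h1, h2⟩ := hcom k hj0 hk0
    have hc : (I j0 * I k0) ⊔ I k = ⊤ :=
      (Ideal.isCoprime_iff_sup_eq).mp
        (IsCoprime.mul_left ((Ideal.isCoprime_iff_sup_eq).mpr h1)
          ((Ideal.isCoprime_iff_sup_eq).mpr h2))
    exact eq_top_iff.mpr (hc ▸ sup_le_sup_right Ideal.mul_le_inf _)
  have htop : (I j0 ⊓ I k0) ⊔ ⨅ k ∈ (Finset.univ.erase j0).erase k0, I k = ⊤ :=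
    Ideal.sup_iInf_eq_top hinf
  have h1 : (1 : R) ∈ (I j0 ⊓ I k0) ⊔ ⨅ k ∈ (Finset.univ.erase j0).erase k0, I k := by
    rw [htop]; exact Submodule.mem_top
  obtain ⟨p, hp, q, hq, hpq⟩ := Submodule.mem_sup.mp h1
  obtain ⟨u, hu, v, hv, huv⟩ := Submodule.mem_sup.mp hab
  simp only [Submodule.mem_iInf] at hq
  rw [memBot]
  refine ⟨q * (a - u), fun k => ?_⟩
  by_cases hkj : k = j0
  · subst hkj
    rw [Pi.add_apply, Pi.single_eq_same, Pi.single_eq_of_ne hne, add_zero, Ideal.Quotient.eq]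
    have he : q * (a - u) - a = -(p * (a - u)) - u := by linear_combination (a - u) * hpq
    rw [he]
    exact sub_mem (neg_mem ((I k).mul_mem_right _ hp.1)) hu
  · by_cases hkk : k = k0
    · subst hkk
      rw [Pi.add_apply, Pi.single_eq_of_ne (Ne.symm hne), Pi.single_eq_same, zero_add,
        Ideal.Quotient.eq]
      have he : q * (a - u) - b = -(p * (b + v)) + v := by
        linear_combination (b + v) * hpq - q * huv
      rw [he]
      exact add_mem (neg_mem ((I k).mul_mem_right _ hp.2)) hv
    · rw [Pi.add_apply, Pi.single_eq_of_ne hkj, Pi.single_eq_of_ne hkk, add_zero,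
        Ideal.Quotient.eq_zero_iff_mem]
      exact (I k).mul_mem_right _
        (hq k (Finset.mem_erase.mpr ⟨hkk, Finset.mem_erase.mpr ⟨hkj, Finset.mem_univ k⟩⟩))

private lemma T_le_bot (j0 k0 : Fin n) (hne : j0 ≠ k0)
    (hcom : ∀ k, k ≠ j0 → k ≠ k0 → I j0 ⊔ I k = ⊤ ∧ I k0 ⊔ I k = ⊤)
    (hsingle : ∀ j, j ≠ j0 → j ≠ k0 → ∀ k, k ≠ j → I j ⊔ I k = ⊤)
    (s : ∀ i, R ⧸ I i)
    (hs : Ideal.Quotient.factor (le_sup_left : I j0 ≤ I j0 ⊔ I k0) (s j0)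
        = Ideal.Quotient.factor (le_sup_right : I k0 ≤ I j0 ⊔ I k0) (s k0)) :
    s ∈ (⊥ : Subalgebra R (∀ i, R ⧸ I i)) := by
  obtain ⟨a, ha⟩ := Ideal.Quotient.mk_surjective (s j0)
  obtain ⟨b, hb⟩ := Ideal.Quotient.mk_surjective (s k0)
  have hab : a - b ∈ I j0 ⊔ I k0 := by
    rw [← ha, ← hb, Ideal.Quotient.factor_mk, Ideal.Quotient.factor_mk] at hs
    exact Ideal.Quotient.eq.mp hs
  have hpair := pair_mem_bot I j0 k0 hne hcom a b hab
  have e1 : ∑ j ∈ Finset.univ.erase j0, Pi.single j (s j) + Pi.single j0 (s j0)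
      = ∑ j : Fin n, Pi.single j (s j) :=
    Finset.sum_erase_add _ _ (Finset.mem_univ j0)
  have e2 : ∑ j ∈ (Finset.univ.erase j0).erase k0, Pi.single j (s j) + Pi.single k0 (s k0)
      = ∑ j ∈ Finset.univ.erase j0, Pi.single j (s j) :=
    Finset.sum_erase_add _ _ (Finset.mem_erase.mpr ⟨hne.symm, Finset.mem_univ k0⟩)
  have hdecomp : s = (∑ j ∈ (Finset.univ.erase j0).erase k0, Pi.single j (s j))
      + (Pi.single j0 (s j0) + Pi.single k0 (s k0)) := by
    conv_lhs => rw [← Finset.univ_sum_single s]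
    rw [← e1, ← e2]
    ring
  rw [hdecomp]
  refine add_mem (Subalgebra.sum_mem _ fun j hj => ?_) ?_
  · have hjk0 : j ≠ k0 := (Finset.mem_erase.mp hj).1
    have hjj0 : j ≠ j0 := (Finset.mem_erase.mp (Finset.mem_erase.mp hj).2).1
    exact single_mem_bot I j (hsingle j hjj0 hjk0) (s j)
  · rw [← ha, ← hb]
    exact hpair

private lemma equalizer_ne_top (j0 k0 : Fin n) (hne : j0 ≠ k0) (K : Ideal R) (hK : K ≠ ⊤)
    (h1 : I j0 ≤ K) (h2 : I k0 ≤ K) :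
    AlgHom.equalizer (projQ I j0 K h1) (projQ I k0 K h2) ≠ ⊤ := by
  intro h
  have hm : Pi.single j0 (1 : R ⧸ I j0) ∈ AlgHom.equalizer (projQ I j0 K h1) (projQ I k0 K h2) := by
    rw [h]; exact Algebra.mem_top
  have h3 := (AlgHom.mem_equalizer _ _ _).mp hm
  rw [projQ_apply, projQ_apply, Pi.single_eq_same, Pi.single_eq_of_ne hne.symm, map_one,
    map_zero] at h3
  apply hK
  rw [Ideal.eq_top_iff_one]
  exact Ideal.Quotient.eq_zero_iff_mem.mp (by rw [map_one]; exact h3)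
end Aux

private lemma algMap_apply {R : Type*} [CommRing R] {n : ℕ} (I : Fin n → Ideal R) (r : R)
    (i : Fin n) : algebraMap R (∀ i, R ⧸ I i) r i = Ideal.Quotient.mk (I i) r := rfl


/-- Let `{I₁,…,Iₙ}`, `n > 2`, be a separating family of ideals of `R`. Then the extension
`R ⊆ ∏ⱼ R/Iⱼ` is a minimal extension iff condition (†) holds. Moreover, if (†) holds, then
`Iⱼ + ∩_{k≠j} Iₖ = ∩_{k≠j} (Iⱼ + Iₖ)` for each `j`. -/
theorem minimal_separating_family_iff (R : Type*) [CommRing R] (n : ℕ) (hn : 2 < n)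
    (I : Fin n → Ideal R) (hproper : ∀ j, I j ≠ ⊤) (hsep : ⨅ j, I j = ⊥) :
    (((⊥ : Subalgebra R (∀ j, R ⧸ I j)) ≠ ⊤ ∧
        ∀ T : Subalgebra R (∀ j, R ⧸ I j), T = ⊥ ∨ T = ⊤) ↔ DaggerCond I) ∧
      (DaggerCond I →
        ∀ j, I j + ⨅ k ∈ Finset.univ.erase j, I k = ⨅ k ∈ Finset.univ.erase j, (I j + I k)) := by
  constructor
  · constructor
    · -- minimal → dagger
      rintro ⟨hbotne, hmin⟩
      have hex : ∃ p : Fin n × Fin n, p.1 ≠ p.2 ∧ I p.1 ⊔ I p.2 ≠ ⊤ := by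
        by_contra hcon
        push_neg at hcon
        apply hbotne
        rw [eq_top_iff]
        intro t _
        rw [← Finset.univ_sum_single t]
        exact Subalgebra.sum_mem _ fun j _ =>
          single_mem_bot I j (fun k hk => hcon (j, k) (Ne.symm hk)) (t j)
      obtain ⟨⟨j0, k0⟩, hne, hJne⟩ := hex
      simp only at hne hJne
      refine ⟨j0, k0, hne, ?_, ?_⟩
      · -- maximality of I j0 + I k0
        rw [Submodule.add_eq_sup, Ideal.isMaximal_def]
        refine ⟨hJne, fun K hK => ?_⟩
        by_contra hKne
        have hj0K : I j0 ≤ K := le_trans le_sup_left hK.le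
        have hk0K : I k0 ≤ K := le_trans le_sup_right hK.le
        have hTKbot : AlgHom.equalizer (projQ I j0 K hj0K) (projQ I k0 K hk0K) = ⊥ :=
          (hmin _).resolve_right (equalizer_ne_top I j0 k0 hne K hKne hj0K hk0K)
        obtain ⟨x, hxK, hxJ⟩ := SetLike.exists_of_lt hK
        have hmem : Pi.single j0 (Ideal.Quotient.mk (I j0) x)
            ∈ AlgHom.equalizer (projQ I j0 K hj0K) (projQ I k0 K hk0K) := by
          rw [AlgHom.mem_equalizer, projQ_apply, projQ_apply, Pi.single_eq_same,
            Pi.single_eq_of_ne hne.symm, map_zero, Ideal.Quotient.factor_mk,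
            Ideal.Quotient.eq_zero_iff_mem]
          exact hxK
        rw [hTKbot, memBot] at hmem
        obtain ⟨r, hr⟩ := hmem
        have h1 : x - r ∈ I j0 := by
          have h := hr j0
          rw [Pi.single_eq_same] at h
          have := (I j0).neg_mem (Ideal.Quotient.eq.mp h)
          rwa [neg_sub] at this
        have h2 : r ∈ I k0 := by
          have h := hr k0
          rw [Pi.single_eq_of_ne hne.symm] at h
          exact Ideal.Quotient.eq_zero_iff_mem.mp h
        exact hxJ (Submodule.mem_sup.mpr ⟨x - r, h1, r, h2, by ring⟩)
      · -- other pairs comaximal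
        have key : ∀ i i' : Fin n, i ≠ i' → i ≠ j0 → i ≠ k0 → I i ⊔ I i' = ⊤ := by
          intro i i' hii hij0 hik0
          have hTJbot : AlgHom.equalizer (projQ I j0 (I j0 ⊔ I k0) le_sup_left)
              (projQ I k0 (I j0 ⊔ I k0) le_sup_right) = ⊥ :=
            (hmin _).resolve_right
              (equalizer_ne_top I j0 k0 hne _ hJne le_sup_left le_sup_right)
          have hmem : Pi.single i (1 : R ⧸ I i)
              ∈ AlgHom.equalizer (projQ I j0 (I j0 ⊔ I k0) le_sup_left)
                (projQ I k0 (I j0 ⊔ I k0) le_sup_right) := by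
            rw [AlgHom.mem_equalizer, projQ_apply, projQ_apply,
              Pi.single_eq_of_ne (Ne.symm hij0), Pi.single_eq_of_ne (Ne.symm hik0),
              map_zero, map_zero]
          rw [hTJbot, memBot] at hmem
          obtain ⟨r, hr⟩ := hmem
          have h1 : (1 : R) - r ∈ I i := by
            have h := hr i
            rw [Pi.single_eq_same] at h
            have h' : Ideal.Quotient.mk (I i) r = Ideal.Quotient.mk (I i) 1 := by
              rw [map_one]; exact h
            have := (I i).neg_mem (Ideal.Quotient.eq.mp h')
            rwa [neg_sub] at this
          have h2 : r ∈ I i' := by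
            have h := hr i'
            rw [Pi.single_eq_of_ne (Ne.symm hii)] at h
            exact Ideal.Quotient.eq_zero_iff_mem.mp h
          rw [Ideal.eq_top_iff_one]
          exact Submodule.mem_sup.mpr ⟨1 - r, h1, r, h2, by ring⟩
        intro j k hjk hpair
        rw [Submodule.add_eq_sup]
        by_cases hj1 : j = j0
        · subst hj1
          have hk2 : k ≠ k0 := fun h => hpair (by rw [h])
          rw [sup_comm]
          exact key k j hjk.symm (Ne.symm hjk) hk2
        · by_cases hj2 : j = k0
          · subst hj2
            have hk2 : k ≠ j0 := fun h => hpair (by rw [h, Finset.pair_comm])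
            rw [sup_comm]
            exact key k j hjk.symm hk2 (Ne.symm hjk)
          · exact key j k hjk hj1 hj2
    · -- dagger → minimal
      intro hD
      obtain ⟨j0, k0, hne, hmax, hd⟩ := hD
      rw [Submodule.add_eq_sup] at hmax
      have hdS : ∀ j k, j ≠ k → ¬(j = j0 ∧ k = k0) → ¬(j = k0 ∧ k = j0) → I j ⊔ I k = ⊤ := by
        intro j k h1 h2 h3
        rw [← Submodule.add_eq_sup]
        apply hd j k h1
        intro he
        have hj : j = j0 ∨ j = k0 := by
          have : j ∈ ({j0, k0} : Finset (Fin n)) := he ▸ (by simp)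
          simpa using this
        have hk : k = j0 ∨ k = k0 := by
          have : k ∈ ({j0, k0} : Finset (Fin n)) := he ▸ (by simp)
          simpa using this
        rcases hj with rfl | rfl <;> rcases hk with h | h <;> simp_all
      have hcom : ∀ k, k ≠ j0 → k ≠ k0 → I j0 ⊔ I k = ⊤ ∧ I k0 ⊔ I k = ⊤ := fun k h1 h2 =>
        ⟨hdS j0 k (Ne.symm h1) (fun h => h2 h.2) (fun h => hne h.1),
         hdS k0 k (Ne.symm h2) (fun h => hne h.1.symm) (fun h => h1 h.2)⟩
      have hsingle : ∀ j, j ≠ j0 → j ≠ k0 → ∀ k, k ≠ j → I j ⊔ I k = ⊤ := fun j h1 h2 k hk =>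
        hdS j k (Ne.symm hk) (fun h => h1 h.1) (fun h => h2 h.1)
      constructor
      · -- ⊥ ≠ ⊤
        intro hbot
        have h1 : Pi.single j0 (1 : R ⧸ I j0) ∈ (⊥ : Subalgebra R (∀ i, R ⧸ I i)) := by
          rw [hbot]; exact Algebra.mem_top
        rw [memBot] at h1
        obtain ⟨r, hr⟩ := h1
        have ha : (1 : R) - r ∈ I j0 := by
          have h := hr j0
          rw [Pi.single_eq_same] at h
          have h' : Ideal.Quotient.mk (I j0) r = Ideal.Quotient.mk (I j0) 1 := by
            rw [map_one]; exact h
          have := (I j0).neg_mem (Ideal.Quotient.eq.mp h')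
          rwa [neg_sub] at this
        have hb : r ∈ I k0 := by
          have h := hr k0
          rw [Pi.single_eq_of_ne hne.symm] at h
          exact Ideal.Quotient.eq_zero_iff_mem.mp h
        exact hmax.ne_top ((Ideal.eq_top_iff_one _).mpr
          (Submodule.mem_sup.mpr ⟨1 - r, ha, r, hb, by ring⟩))
      · intro T
        by_cases hT : ∀ s ∈ T, Ideal.Quotient.factor (le_sup_left : I j0 ≤ I j0 ⊔ I k0) (s j0)
            = Ideal.Quotient.factor (le_sup_right : I k0 ≤ I j0 ⊔ I k0) (s k0)
        · left
          exact le_antisymm (fun s hs => T_le_bot I j0 k0 hne hcom hsingle s (hT s hs)) bot_le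
        · right
          push_neg at hT
          obtain ⟨s, hsT, hsne⟩ := hT
          haveI := hmax
          letI : Field (R ⧸ (I j0 ⊔ I k0)) := Ideal.Quotient.field _
          set d := Ideal.Quotient.factor (le_sup_left : I j0 ≤ I j0 ⊔ I k0) (s j0)
            - Ideal.Quotient.factor (le_sup_right : I k0 ≤ I j0 ⊔ I k0) (s k0) with hd_def
          have hd0 : d ≠ 0 := sub_ne_zero.mpr hsne
          obtain ⟨c, hc⟩ := Ideal.Quotient.mk_surjective d⁻¹
          obtain ⟨a, ha⟩ := Ideal.Quotient.mk_surjective (s j0)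
          obtain ⟨b, hb⟩ := Ideal.Quotient.mk_surjective (s k0)
          have hcd : Ideal.Quotient.mk (I j0 ⊔ I k0) (c * (a - b)) = 1 := by
            rw [map_mul, map_sub, hc]
            rw [← ha, ← hb, Ideal.Quotient.factor_mk, Ideal.Quotient.factor_mk] at hd_def
            rw [← hd_def]
            exact inv_mul_cancel₀ hd0
          have hm : (1 : R) - c * (a - b) ∈ I j0 ⊔ I k0 := by
            have h' : Ideal.Quotient.mk (I j0 ⊔ I k0) (c * (a - b))
                = Ideal.Quotient.mk (I j0 ⊔ I k0) 1 := by rw [map_one]; exact hcd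
            have := (I j0 ⊔ I k0).neg_mem (Ideal.Quotient.eq.mp h')
            rwa [neg_sub] at this
          have hP : ∀ x y : R, x - y ∈ I j0 ⊔ I k0 →
              Pi.single j0 (Ideal.Quotient.mk (I j0) x)
                + Pi.single k0 (Ideal.Quotient.mk (I k0) y) ∈ T :=
            fun x y h => (bot_le : (⊥ : Subalgebra R (∀ i, R ⧸ I i)) ≤ T)
              (pair_mem_bot I j0 k0 hne hcom x y h)
          have hu : Pi.single j0 (Ideal.Quotient.mk (I j0) (a - b)) ∈ T := by
            have h1 : Pi.single j0 (1 : R ⧸ I j0) + Pi.single k0 (1 : R ⧸ I k0) ∈ T := by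
              have := hP 1 1 (by simp)
              simpa using this
            have h2 : Pi.single j0 (Ideal.Quotient.mk (I j0) b)
                + Pi.single k0 (Ideal.Quotient.mk (I k0) b) ∈ T := hP b b (by simp)
            have key : Pi.single j0 (Ideal.Quotient.mk (I j0) (a - b))
                = (Pi.single j0 (1 : R ⧸ I j0) + Pi.single k0 (1 : R ⧸ I k0)) * s
                  - (Pi.single j0 (Ideal.Quotient.mk (I j0) b)
                    + Pi.single k0 (Ideal.Quotient.mk (I k0) b)) := by
              funext i
              rcases eq_or_ne i j0 with rfl | hi1
              · have hik : i ≠ k0 := hne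
                simp [Pi.single_eq_of_ne hik, ← ha, map_sub]
              · rcases eq_or_ne i k0 with rfl | hi2
                · have hij : i ≠ j0 := hi1
                  simp [Pi.single_eq_of_ne hij, ← hb]
                · simp [Pi.single_eq_of_ne hi1, Pi.single_eq_of_ne hi2]
            rw [key]
            exact sub_mem (mul_mem h1 hsT) h2
          have hj0x : ∀ x : R, Pi.single j0 (Ideal.Quotient.mk (I j0) x) ∈ T := by
            intro x
            have hxm : Pi.single j0 (Ideal.Quotient.mk (I j0) (x * (1 - c * (a - b)))) ∈ T := by
              have h := hP (x * (1 - c * (a - b))) 0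
                (by simpa using (I j0 ⊔ I k0).mul_mem_left x hm)
              simpa using h
            have key : Pi.single j0 (Ideal.Quotient.mk (I j0) x)
                = Pi.single j0 (Ideal.Quotient.mk (I j0) (x * (1 - c * (a - b))))
                  + algebraMap R (∀ i, R ⧸ I i) (x * c)
                    * Pi.single j0 (Ideal.Quotient.mk (I j0) (a - b)) := by
              funext i
              rcases eq_or_ne i j0 with rfl | hi1
              · simp only [Pi.add_apply, Pi.mul_apply, algMap_apply, Pi.single_eq_same]
                rw [← map_mul, ← map_add]
                congr 1
                ring
              · simp only [Pi.add_apply, Pi.mul_apply, Pi.single_eq_of_ne hi1, mul_zero,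
                  add_zero]
            rw [key]
            exact add_mem hxm (mul_mem (Subalgebra.algebraMap_mem T _) hu)
          have hj0z : ∀ z : R ⧸ I j0, Pi.single j0 z ∈ T := by
            intro z
            obtain ⟨x, rfl⟩ := Ideal.Quotient.mk_surjective z
            exact hj0x x
          have hk0z : ∀ z : R ⧸ I k0, Pi.single k0 z ∈ T := by
            intro z
            obtain ⟨y, rfl⟩ := Ideal.Quotient.mk_surjective z
            have h1 := hP y y (by simp)
            have h2 := sub_mem h1 (hj0z (Ideal.Quotient.mk (I j0) y))
            rwa [add_sub_cancel_left] at h2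
          rw [eq_top_iff]
          intro t _
          rw [← Finset.univ_sum_single t]
          refine Subalgebra.sum_mem _ fun i _ => ?_
          rcases eq_or_ne i j0 with rfl | hi1
          · exact hj0z _
          · rcases eq_or_ne i k0 with rfl | hi2
            · exact hk0z _
            · exact (bot_le : (⊥ : Subalgebra R (∀ i, R ⧸ I i)) ≤ T)
                (single_mem_bot I i (hsingle i hi1 hi2) (t i))
  · -- moreover
    intro hD j
    obtain ⟨j0, k0, hne, hmax, hd⟩ := hD
    have hdS : ∀ p k, p ≠ k → ¬(p = j0 ∧ k = k0) → ¬(p = k0 ∧ k = j0) → I p ⊔ I k = ⊤ := by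
      intro p k h1 h2 h3
      rw [← Submodule.add_eq_sup]
      apply hd p k h1
      intro he
      have hj : p = j0 ∨ p = k0 := by
        have : p ∈ ({j0, k0} : Finset (Fin n)) := he ▸ (by simp)
        simpa using this
      have hk : k = j0 ∨ k = k0 := by
        have : k ∈ ({j0, k0} : Finset (Fin n)) := he ▸ (by simp)
        simpa using this
      rcases hj with rfl | rfl <;> rcases hk with h | h <;> simp_all
    simp only [Submodule.add_eq_sup]
    refine le_antisymm (le_iInf fun k => le_iInf fun hk =>
      sup_le_sup_left (biInf_le _ hk) _) ?_
    have main : ∀ q : Fin n, j ≠ q → (∀ k, k ≠ j → k ≠ q → I j ⊔ I k = ⊤) →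
        (⨅ k ∈ Finset.univ.erase j, (I j ⊔ I k)) ≤ I j ⊔ ⨅ k ∈ Finset.univ.erase j, I k := by
      intro q hjq hcom'
      refine le_trans (biInf_le _ (Finset.mem_erase.mpr ⟨Ne.symm hjq, Finset.mem_univ q⟩)) ?_
      intro x hx
      obtain ⟨u, hu, v, hv, huv⟩ := Submodule.mem_sup.mp hx
      have htop : I j ⊔ ⨅ k ∈ (Finset.univ.erase j).erase q, I k = ⊤ := by
        refine Ideal.sup_iInf_eq_top fun k hk => ?_
        exact hcom' k (Finset.ne_of_mem_erase (Finset.mem_erase.mp hk).2)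
          (Finset.mem_erase.mp hk).1
      have h1 : (1 : R) ∈ I j ⊔ ⨅ k ∈ (Finset.univ.erase j).erase q, I k := by
        rw [htop]; exact Submodule.mem_top
      obtain ⟨p, hp, w, hw, hpw⟩ := Submodule.mem_sup.mp h1
      simp only [Submodule.mem_iInf] at hw
      refine Submodule.mem_sup.mpr ⟨u + p * v, add_mem hu ((I j).mul_mem_right v hp),
        w * v, ?_, by linear_combination huv + v * hpw⟩
      simp only [Submodule.mem_iInf]
      intro k hk
      rcases eq_or_ne k q with rfl | hkq
      · exact (I k).mul_mem_left w hv
      · exact (I k).mul_mem_right v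
          (hw k (Finset.mem_erase.mpr ⟨hkq, hk⟩))
    rcases eq_or_ne j j0 with rfl | hj1
    · exact main k0 hne fun k h1 h2 =>
        hdS j k (Ne.symm h1) (fun h => h2 h.2) (fun h => hne h.1)
    · rcases eq_or_ne j k0 with rfl | hj2
      · exact main j0 (Ne.symm hne) fun k h1 h2 =>
          hdS j k (Ne.symm h1) (fun h => hne h.1.symm) (fun h => h2 h.2)
      · have : I j ⊔ ⨅ k ∈ Finset.univ.erase j, I k = ⊤ := by
          refine Ideal.sup_iInf_eq_top fun k hk => ?_
          exact hdS j k (Ne.symm (Finset.ne_of_mem_erase hk)) (fun h => hj1 h.1)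
            (fun h => hj2 h.1)
        rw [this]
        exact le_top
end

section
/- Let (R,M) be a ΣPIR (an infinite special principal ideal ring) and n > 1 an integer. Then the diagonal extension R ⊆ R^n has FIP if and only if n = 2. -/
private lemma quot_pow_finite_step {R : Type*} [CommRing R] (t : R) (k : ℕ)
    (h1 : Finite (R ⧸ Ideal.span {t})) (hk : Finite (R ⧸ Ideal.span {t} ^ k)) :
    Finite (R ⧸ Ideal.span {t} ^ (k + 1)) := by
  have hdig : ∀ x : R ⧸ Ideal.span {t} ^ (k + 1), ∃ b : R,
      b * t ^ k = x.out - (Ideal.Quotient.mk (Ideal.span {t} ^ k) x.out).out := by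
    intro x
    have h2 : x.out - (Ideal.Quotient.mk (Ideal.span {t} ^ k) x.out).out ∈
        Ideal.span {t} ^ k :=
      Ideal.Quotient.eq.mp (Quotient.out_eq' (Ideal.Quotient.mk (Ideal.span {t} ^ k) x.out)).symm
    have hconv : ∀ z : R, z ∈ Ideal.span {t} ^ k → z ∈ Ideal.span {t ^ k} := fun z hz => by
      rwa [Ideal.span_singleton_pow] at hz
    exact Ideal.mem_span_singleton'.mp (hconv _ h2)
  have hFinj : Function.Injective (fun x : R ⧸ Ideal.span {t} ^ (k + 1) =>
      ((Ideal.Quotient.mk (Ideal.span {t} ^ k) x.out,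
        Ideal.Quotient.mk (Ideal.span {t}) (Classical.choose (hdig x))) :
        (R ⧸ Ideal.span {t} ^ k) × (R ⧸ Ideal.span {t}))) := by
    intro x y hxy
    have h1 : Ideal.Quotient.mk (Ideal.span {t} ^ k) x.out
        = Ideal.Quotient.mk (Ideal.span {t} ^ k) y.out := congrArg Prod.fst hxy
    have h2 : Classical.choose (hdig x) - Classical.choose (hdig y) ∈ Ideal.span {t} :=
      Ideal.Quotient.eq.mp (congrArg Prod.snd hxy)
    obtain ⟨c, hc⟩ := Ideal.mem_span_singleton'.mp h2
    have hx := Classical.choose_spec (hdig x)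
    have hy := Classical.choose_spec (hdig y)
    have houts : (Ideal.Quotient.mk (Ideal.span {t} ^ k) x.out).out
        = (Ideal.Quotient.mk (Ideal.span {t} ^ k) y.out).out := congrArg Quotient.out h1
    have hconv : ∀ z : R, z ∈ Ideal.span {t ^ (k + 1)} → z ∈ Ideal.span {t} ^ (k + 1) :=
      fun z hz => by rwa [Ideal.span_singleton_pow]
    have hsub : x.out - y.out ∈ Ideal.span {t} ^ (k + 1) := by
      apply hconv
      refine Ideal.mem_span_singleton'.mpr ⟨c, ?_⟩
      have hdiff : x.out - y.out
          = (Classical.choose (hdig x) - Classical.choose (hdig y)) * t ^ k := by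
        rw [sub_mul, hx, hy, houts]
        ring
      rw [hdiff, ← hc, pow_succ']
      ring
    calc x = Ideal.Quotient.mk (Ideal.span {t} ^ (k + 1)) x.out := (Quotient.out_eq' x).symm
      _ = Ideal.Quotient.mk (Ideal.span {t} ^ (k + 1)) y.out := Ideal.Quotient.eq.mpr hsub
      _ = y := Quotient.out_eq' y
  exact Finite.of_injective _ hFinj

private def diagLine {R : Type*} [CommRing R] {n : ℕ} (v : Fin n → R) (hv : v * v = 0) :
    Subalgebra R (Fin n → R) where
  carrier := {w | ∃ a b : R, w = algebraMap R (Fin n → R) a + b • v}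
  mul_mem' := by
    rintro x y ⟨a, b, rfl⟩ ⟨a', b', rfl⟩
    refine ⟨a * a', a * b' + a' * b, ?_⟩
    simp only [Algebra.smul_def, map_mul, map_add]
    linear_combination (algebraMap R (Fin n → R) b * algebraMap R (Fin n → R) b') * hv
  one_mem' := ⟨1, 0, by simp⟩
  add_mem' := by
    rintro x y ⟨a, b, rfl⟩ ⟨a', b', rfl⟩
    exact ⟨a + a', b + b', by rw [map_add, add_smul]; abel⟩
  zero_mem' := ⟨0, 0, by simp⟩
  algebraMap_mem' := fun r => ⟨r, 0, by simp⟩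

private lemma mem_diagLine {R : Type*} [CommRing R] {n : ℕ} {v : Fin n → R} {hv : v * v = 0}
    {w : Fin n → R} :
    w ∈ diagLine v hv ↔ ∃ a b : R, w = algebraMap R (Fin n → R) a + b • v := Iff.rfl

/-- Let `(R, M)` be a ΣPIR (an infinite SPIR) and `n > 1`. Then the diagonal extension
`R ⊆ R^n` has FIP iff `n = 2`. -/
theorem fip_power_sigma_pir_iff (R : Type*) [CommRing R] (M : Ideal R)
    (hspir : IsSPIR R M) (hinf : Infinite R) (n : ℕ) (hn : 1 < n) :
    Finite (Subalgebra R (Fin n → R)) ↔ n = 2 := by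
  classical
  obtain ⟨hpir, -, hMprime, hMne, huniq, p0, hp0pos, hp0⟩ := hspir
  obtain ⟨t, ht⟩ := (hpir.principal M).principal
  -- every element outside M is a unit
  have hu : ∀ x : R, x ∉ M → IsUnit x := by
    intro x hx
    by_contra hnu
    obtain ⟨P, hPmax, hP⟩ := Ideal.exists_le_maximal (Ideal.span {x})
      (fun h => hnu (Ideal.span_singleton_eq_top.mp h))
    have hPprime := hPmax.isPrime
    have hPne : P ≠ ⊥ := by
      rintro rfl
      exact hMne (le_bot_iff.mp (hPprime.le_of_pow_le (le_of_eq hp0)))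
    exact hx (huniq P hPprime hPne ▸ hP (Ideal.subset_span (Set.mem_singleton x)))
  have hex : ∃ k, M ^ k = ⊥ := ⟨p0, hp0⟩
  set q := Nat.find hex with hqdef
  have hq : M ^ q = ⊥ := Nat.find_spec hex
  have hq2 : 2 ≤ q := by
    by_contra h
    interval_cases q
    · rw [pow_zero, Ideal.one_eq_top] at hq
      exact top_ne_bot hq
    · rw [pow_one] at hq
      exact hMne hq
  have htM : t ∈ M := ht ▸ Ideal.mem_span_singleton_self t
  have htq : t ^ q = 0 := by
    have h := Ideal.pow_mem_pow htM q
    rwa [hq, Ideal.mem_bot] at h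
  have hMk : ∀ k : ℕ, M ^ k = Ideal.span {t ^ k} := fun k => by
    rw [ht]; exact Ideal.span_singleton_pow t k
  set m := t ^ (q - 1) with hmdef
  have hm0 : m ≠ 0 := by
    intro h
    have hb : M ^ (q - 1) = ⊥ := by
      rw [hMk, ← hmdef, h, Ideal.span_singleton_eq_bot]
    exact Nat.find_min hex (by omega) hb
  have hmM : m ∈ M := ht ▸ Ideal.mem_span_singleton.mpr (dvd_pow_self t (by omega))
  have htm : t * m = 0 := by
    rw [hmdef, ← pow_succ']
    have hq1 : q - 1 + 1 = q := by omega
    rw [hq1, htq]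
  have hMm : ∀ x ∈ M, x * m = 0 := by
    intro x hx
    obtain ⟨c, rfl⟩ := Ideal.mem_span_singleton'.mp (ht ▸ hx)
    rw [mul_assoc, htm, mul_zero]
  have hann : ∀ x : R, x * m = 0 → x ∈ M := by
    intro x hxm
    by_contra hx
    exact hm0 ((hu x hx).mul_left_cancel (by rw [hxm, mul_zero]))
  constructor
  · -- FIP implies n = 2
    intro hfin
    by_contra hne
    have h3 : 3 ≤ n := by omega
    -- infinite residue field
    have hRMinf : Infinite (R ⧸ M) := by
      by_contra hfinq
      rw [not_infinite_iff_finite] at hfinq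
      have hstep : ∀ k : ℕ, Finite (R ⧸ M ^ k) := by
        intro k
        induction k with
        | zero =>
          rw [pow_zero, Ideal.one_eq_top]
          have : Subsingleton (R ⧸ (⊤ : Ideal R)) := Ideal.Quotient.subsingleton_iff.mpr rfl
          exact Finite.of_subsingleton
        | succ k ih =>
          rw [ht] at ih ⊢
          exact quot_pow_finite_step t k (by rwa [ht] at hfinq) ih
      have hfq : Finite (R ⧸ M ^ q) := hstep q
      have hinj : Function.Injective (Ideal.Quotient.mk (M ^ q)) := by
        intro a b hab
        have h := Ideal.Quotient.eq.mp hab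
        rwa [hq, Ideal.mem_bot, sub_eq_zero] at h
      have : Finite R := Finite.of_injective _ hinj
      exact not_finite R
    set v : R → (Fin n → R) := fun r i => if (i : ℕ) = 1 then m else
      if (i : ℕ) = 2 then r * m else 0 with hvdef
    have hvv : ∀ r : R, v r * v r = 0 := by
      intro r
      funext i
      rw [Pi.mul_apply, Pi.zero_apply]
      simp only [hvdef]
      by_cases h1 : (i : ℕ) = 1
      · rw [if_pos h1]
        exact hMm m hmM
      · rw [if_neg h1]
        by_cases h2 : (i : ℕ) = 2
        · rw [if_pos h2]
          linear_combination (r * r) * hMm m hmM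
        · rw [if_neg h2]
          exact mul_zero 0
    set A : R → Subalgebra R (Fin n → R) := fun r => diagLine (v r) (hvv r) with hAdef
    have key : ∀ r s : R, A r = A s → s - r ∈ M := by
      intro r s hAs
      have hvs : v s ∈ A r := by
        rw [hAs]
        exact mem_diagLine.mpr ⟨0, 1, by simp⟩
      obtain ⟨a, b, hab⟩ := mem_diagLine.mp hvs
      have h0 : (0 : R) = a := by
        have h := congrFun hab (⟨0, by omega⟩ : Fin n)
        simpa [hvdef, Pi.algebraMap_apply, Algebra.algebraMap_self_apply] using h
      have h1 : m = a + b * m := by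
        have h := congrFun hab (⟨1, by omega⟩ : Fin n)
        simpa [hvdef, Pi.algebraMap_apply, Algebra.algebraMap_self_apply] using h
      have h2 : s * m = a + b * (r * m) := by
        have h := congrFun hab (⟨2, by omega⟩ : Fin n)
        simpa [hvdef, Pi.algebraMap_apply, Algebra.algebraMap_self_apply] using h
      apply hann
      have hbm : b * m = m := by rw [← h0, zero_add] at h1; exact h1.symm
      have hcalc : (s - r) * m = r * (b * m - m) := by
        rw [sub_mul, h2, ← h0, zero_add]
        ring
      rw [hcalc, hbm, sub_self, mul_zero]
    have hFinj : Function.Injective (fun x : R ⧸ M => A x.out) := by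
      intro x y hxy
      have hd : y.out - x.out ∈ M := key _ _ hxy
      calc x = Ideal.Quotient.mk M x.out := (Quotient.out_eq' x).symm
        _ = Ideal.Quotient.mk M y.out := by
            refine Ideal.Quotient.eq.mpr ?_
            have hneg := M.neg_mem hd
            rwa [neg_sub] at hneg
        _ = y := Quotient.out_eq' y
    have hSinf : Infinite (Subalgebra R (Fin n → R)) := Infinite.of_injective _ hFinj
    exact absurd hfin hSinf.not_finite
  · -- n = 2 implies FIP
    rintro rfl
    have hIfin : Finite (Ideal R) := by
      have hsurj : Function.Surjective (fun k : Fin (q + 1) => M ^ (k : ℕ)) := by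
        intro I
        rcases eq_or_ne I ⊥ with rfl | hI
        · exact ⟨⟨q, by omega⟩, hq⟩
        · obtain ⟨a, ha⟩ := (hpir.principal I).principal
          have ha0 : a ≠ 0 := fun h => hI (by rw [ha, h]; exact Ideal.span_singleton_eq_bot.mpr rfl)
          have hex2 : ∃ j : ℕ, a ∉ M ^ j :=
            ⟨q, fun h => ha0 (by rwa [hq, Ideal.mem_bot] at h)⟩
          obtain ⟨j, hjspec, hjmin⟩ : ∃ j : ℕ, a ∉ M ^ j ∧ ∀ i < j, a ∈ M ^ i :=
            ⟨Nat.find hex2, Nat.find_spec hex2, fun i hi => not_not.mp (Nat.find_min hex2 hi)⟩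
          have hj0 : j ≠ 0 := by
            intro h
            rw [h, pow_zero, Ideal.one_eq_top] at hjspec
            exact hjspec Submodule.mem_top
          have hjq : j ≤ q := by
            by_contra h
            exact ha0 (by have hmm := hjmin q (by omega); rwa [hq, Ideal.mem_bot] at hmm)
          have hmem : a ∈ M ^ (j - 1) := hjmin (j - 1) (by omega)
          obtain ⟨c, hc⟩ := Ideal.mem_span_singleton'.mp (by rwa [hMk] at hmem)
          have hcu : IsUnit c := by
            apply hu
            intro hcM
            obtain ⟨d, hd⟩ := Ideal.mem_span_singleton'.mp (ht ▸ hcM)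
            apply hjspec
            rw [hMk]
            refine Ideal.mem_span_singleton'.mpr ⟨d, ?_⟩
            rw [← hc, ← hd]
            have hjj : j = (j - 1) + 1 := by omega
            calc d * t ^ j = d * t ^ ((j - 1) + 1) := by rw [← hjj]
              _ = d * t * t ^ (j - 1) := by ring
          refine ⟨⟨j - 1, by omega⟩, ?_⟩
          show M ^ (j - 1) = I
          rw [hMk, ha, ← hc]
          exact (Ideal.span_singleton_mul_left_unit hcu _).symm
      exact Finite.of_surjective _ hsurj
    let e : R → (Fin 2 → R) := fun x i => if i = 0 then x else 0
    have he0 : e 0 = 0 := by funext i; simp [e]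
    have headd : ∀ x y : R, e (x + y) = e x + e y := by
      intro x y; funext i; by_cases h : i = 0 <;> simp [e, h]
    have hesmul : ∀ c x : R, e (c * x) = algebraMap R (Fin 2 → R) c * e x := by
      intro c x; funext i; by_cases h : i = 0 <;>
        simp [e, h, Pi.algebraMap_apply, Algebra.algebraMap_self_apply]
    have hesub : ∀ w : Fin 2 → R, e (w 0 - w 1) = w - algebraMap R (Fin 2 → R) (w 1) := by
      intro w; funext i; fin_cases i <;>
        simp [e, Pi.algebraMap_apply, Algebra.algebraMap_self_apply]
    let Φ : Subalgebra R (Fin 2 → R) → Ideal R := fun A =>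
      { carrier := {x : R | e x ∈ A}
        add_mem' := fun {x y} hx hy => by
          show e (x + y) ∈ A
          rw [headd]; exact A.add_mem hx hy
        zero_mem' := by
          show e 0 ∈ A
          rw [he0]; exact A.zero_mem
        smul_mem' := fun c {x} hx => by
          show e (c • x) ∈ A
          rw [smul_eq_mul, hesmul]
          exact A.mul_mem (A.algebraMap_mem c) hx }
    have hle : ∀ A B : Subalgebra R (Fin 2 → R), Φ A = Φ B → A ≤ B := by
      intro A B h w hw
      have h1 : w 0 - w 1 ∈ Φ A := by
        show e (w 0 - w 1) ∈ A
        rw [hesub]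
        exact A.sub_mem hw (A.algebraMap_mem (w 1))
      rw [h] at h1
      have h2 : e (w 0 - w 1) ∈ B := h1
      have hw2 : w = algebraMap R (Fin 2 → R) (w 1) + e (w 0 - w 1) := by
        rw [hesub]; ring
      rw [hw2]
      exact B.add_mem (B.algebraMap_mem _) h2
    exact Finite.of_injective Φ (fun A B h => le_antisymm (hle A B h) (hle B A h.symm))
end

section
/- Let R be a commutative ring and n > 1 an integer. Then the diagonal extension R ⊆ R^n has FIP if and only if R is an FMIR and, in case R is a ΣFMIR, n = 2. -/
/-- `R` is a ΣFMIR: a ring with finitely many ideals such that the localization of `R` at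
some maximal ideal is an infinite SPIR. -/
def IsSigmaFMIR (R : Type*) [CommRing R] : Prop :=
  Finite (Ideal R) ∧ ∃ (M : Ideal R) (hM : M.IsMaximal),
    haveI := hM.isPrime
    Infinite (Localization.AtPrime M) ∧
      IsSPIR (Localization.AtPrime M) (IsLocalRing.maximalIdeal (Localization.AtPrime M))

universe u

section Chunk1

variable {R : Type*} [CommRing R] {n : ℕ}

/-- The subalgebra of `R^n` attached to an ideal `I`: tuples with pairwise differences in `I`. -/
def idealSA (I : Ideal R) : Subalgebra R (Fin n → R) where
  carrier := {x | ∀ i j, x i - x j ∈ I}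
  mul_mem' := by
    intro a b ha hb i j
    show a i * b i - a j * b j ∈ I
    have : a i * b i - a j * b j = a i * (b i - b j) + b j * (a i - a j) := by ring
    rw [this]
    exact add_mem (I.mul_mem_left _ (hb i j)) (I.mul_mem_left _ (ha i j))
  add_mem' := by
    intro a b ha hb i j
    show a i + b i - (a j + b j) ∈ I
    have : a i + b i - (a j + b j) = (a i - a j) + (b i - b j) := by ring
    rw [this]
    exact add_mem (ha i j) (hb i j)
  algebraMap_mem' := by intro r i j; simp

lemma idealSA_injective (hn : 1 < n) : Function.Injective (idealSA (R := R) (n := n)) := by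
  have h0 : (0 : ℕ) < n := by omega
  intro I J h
  have key : ∀ I J : Ideal R, idealSA (n := n) I = idealSA (n := n) J → I ≤ J := by
    intro I J h x hx
    have hm : (fun i : Fin n => if i = ⟨0, h0⟩ then x else 0) ∈ idealSA (n := n) I := by
      intro i j
      show _ - _ ∈ I
      by_cases hi : i = ⟨0, h0⟩ <;> by_cases hj : j = ⟨0, h0⟩ <;> simp [hi, hj] <;> simpa using I.neg_mem hx
    rw [h] at hm
    have := hm ⟨0, h0⟩ ⟨1, hn⟩
    simp only [idealSA] at this
    simpa [show (⟨1, hn⟩ : Fin n) ≠ ⟨0, h0⟩ by simp] using this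
  exact le_antisymm (key I J h) (key J I h.symm)

lemma finite_ideal_of_finite_sa (hn : 1 < n) (h : Finite (Subalgebra R (Fin n → R))) :
    Finite (Ideal R) :=
  Finite.of_injective _ (idealSA_injective hn)

/-- For `n = 2`, subalgebras inject into ideals. -/
def saIdeal (A : Subalgebra R (Fin 2 → R)) : Ideal R where
  carrier := {r | ∃ v ∈ A, v 0 - v 1 = r}
  zero_mem' := ⟨1, A.one_mem, by simp⟩
  add_mem' := by
    rintro a b ⟨v, hv, rfl⟩ ⟨w, hw, rfl⟩
    exact ⟨v + w, A.add_mem hv hw, by simp; ring⟩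
  smul_mem' := by
    rintro c a ⟨v, hv, rfl⟩
    exact ⟨c • v, A.smul_mem hv c, by simp; ring⟩

lemma saIdeal_injective : Function.Injective (saIdeal (R := R)) := by
  have key : ∀ A B : Subalgebra R (Fin 2 → R), saIdeal A = saIdeal B → A ≤ B := by
    intro A B h x hx
    have hmem : x 0 - x 1 ∈ saIdeal A := ⟨x, hx, rfl⟩
    rw [h] at hmem
    obtain ⟨v, hv, hv2⟩ := hmem
    have hx2 : x = v + (x 0 - v 0) • 1 := by
      funext i
      fin_cases i
      · show x 0 = v 0 + (x 0 - v 0) * 1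
        ring
      · show x 1 = v 1 + (x 0 - v 0) * 1
        have h3 : x 0 - v 0 = x 1 - v 1 := by linear_combination -hv2
        rw [h3]; ring
    rw [hx2]
    exact B.add_mem hv (B.smul_mem B.one_mem _)
  intro A B h
  exact le_antisymm (key A B h) (key B A h.symm)

lemma finite_sa_two_of_finite_ideal (h : Finite (Ideal R)) :
    Finite (Subalgebra R (Fin 2 → R)) :=
  Finite.of_injective _ saIdeal_injective

end Chunk1

section Chunk2

open IsLocalRing


/-- A local ring with finitely many ideals and finite residue field is finite. -/
lemma finite_of_finite_residue :
    ∀ (c : ℕ) (T : Type u) [CommRing T] [IsLocalRing T], Finite (Ideal T) →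
      Nat.card (Ideal T) ≤ c → Finite (T ⧸ maximalIdeal T) → Finite T := by
  intro c
  induction c with
  | zero =>
    intro T _ _ hfin hc _
    have : 0 < Nat.card (Ideal T) := Nat.card_pos
    omega
  | succ c ih =>
    intro T _ _ hfin hc hres
    by_cases hM : maximalIdeal T = ⊥
    · -- T injects into its residue field
      have hinj : Function.Injective (Ideal.Quotient.mk (maximalIdeal T)) := by
        rw [RingHom.injective_iff_ker_eq_bot, Ideal.mk_ker, hM]
      exact Finite.of_injective _ hinj
    · -- find a minimal nonzero ideal J
      have hwf : WellFoundedLT (Ideal T) := Finite.to_wellFoundedLT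
      obtain ⟨J, hJne, hJmin⟩ := hwf.wf.has_min {I : Ideal T | I ≠ ⊥} ⟨_, hM⟩
      obtain ⟨x, hxJ, hx0⟩ := Submodule.ne_bot_iff J |>.mp hJne
      have hspan : Ideal.span {x} = J := by
        have h1 : Ideal.span {x} ≤ J := Ideal.span_le.mpr (by simpa using hxJ)
        have h2 : Ideal.span {x} ≠ ⊥ := by
          simpa [Ideal.span_eq_bot] using hx0
        by_contra hne
        exact hJmin _ h2 (lt_of_le_of_ne h1 hne)
      -- J ≤ maximalIdeal
      have hJM : J ≤ maximalIdeal T := by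
        by_contra hnle
        obtain ⟨y, hyJ, hyM⟩ := SetLike.not_le_iff_exists.mp hnle
        have hyu : IsUnit y := by
          by_contra hyu
          exact hyM (IsLocalRing.mem_maximalIdeal y |>.mpr hyu)
        have hJtop : J = ⊤ := Ideal.eq_top_of_isUnit_mem J hyJ hyu
        refine hJmin (maximalIdeal T) hM ?_
        rw [hJtop]
        exact lt_top_iff_ne_top.mpr (Ideal.IsMaximal.ne_top (maximalIdeal.isMaximal T))
      -- maximalIdeal • J = ⊥, so M kills x
      have hMx : ∀ m ∈ maximalIdeal T, m * x = 0 := by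
        have hsm : maximalIdeal T • J = ⊥ := by
          by_contra hne
          have hle : maximalIdeal T • J ≤ J := Submodule.smul_le_right
          have heq : maximalIdeal T • J = J := by
            by_contra hne2
            exact hJmin _ hne (lt_of_le_of_ne hle hne2)
          have : J = ⊥ := Submodule.eq_bot_of_le_smul_of_le_jacobson_bot (maximalIdeal T) J
            (hspan ▸ Submodule.fg_span_singleton x) heq.ge
            (by rw [IsLocalRing.jacobson_eq_maximalIdeal ⊥ bot_ne_top])
          exact hJne this
        intro m hm
        have : m • x ∈ maximalIdeal T • J := Submodule.smul_mem_smul hm hxJ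
        rw [hsm] at this
        simpa using this
      -- J is finite
      have hJfin : Finite J := by
        have hsurj : Function.Surjective
            (fun z : T ⧸ maximalIdeal T => (⟨z.out * x, by
              rw [← hspan]; exact Ideal.mul_mem_left _ _ (Ideal.mem_span_singleton_self x)⟩ : J)) := by
          rintro ⟨y, hy⟩
          rw [← hspan, Ideal.mem_span_singleton'] at hy
          obtain ⟨r, rfl⟩ := hy
          refine ⟨Ideal.Quotient.mk _ r, ?_⟩
          have hout : (Ideal.Quotient.mk (maximalIdeal T) r).out - r ∈ maximalIdeal T := by
            rw [← Ideal.Quotient.eq]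
            exact Quotient.out_eq _
          ext
          show (Ideal.Quotient.mk (maximalIdeal T) r).out * x = r * x
          have h2 : ((Ideal.Quotient.mk (maximalIdeal T) r).out - r) * x = 0 := hMx _ hout
          linear_combination h2
        exact Finite.of_surjective _ hsurj
      -- T ⧸ J is a local ring with fewer ideals and same residue field
      have hJtop : J ≠ ⊤ := fun h => (Ideal.IsMaximal.ne_top (maximalIdeal.isMaximal T))
        (top_le_iff.mp (h ▸ hJM))
      haveI : Nontrivial (T ⧸ J) := Ideal.Quotient.nontrivial_iff.mpr hJtop
      haveI : IsLocalRing (T ⧸ J) :=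
        IsLocalRing.of_surjective' (Ideal.Quotient.mk J) Ideal.Quotient.mk_surjective
      have hcomapinj : Function.Injective
          (fun I : Ideal (T ⧸ J) => I.comap (Ideal.Quotient.mk J)) := by
        intro I I' h
        have := Ideal.comap_injective_of_surjective (Ideal.Quotient.mk J)
          Ideal.Quotient.mk_surjective h
        exact this
      haveI hfin' : Finite (Ideal (T ⧸ J)) := Finite.of_injective _ hcomapinj
      have hcard : Nat.card (Ideal (T ⧸ J)) ≤ c := by
        have hnotsurj : ¬ Function.Surjective
            (fun I : Ideal (T ⧸ J) => I.comap (Ideal.Quotient.mk J)) := by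
          intro hsurj
          obtain ⟨I, hI⟩ := hsurj ⊥
          have hle : J ≤ I.comap (Ideal.Quotient.mk J) := by
            intro a ha
            show Ideal.Quotient.mk J a ∈ I
            rw [Ideal.Quotient.eq_zero_iff_mem.mpr ha]
            exact I.zero_mem
          simp only [] at hI
          rw [hI] at hle
          exact hJne (le_bot_iff.mp hle)
        have hlt : Nat.card (Ideal (T ⧸ J)) < Nat.card (Ideal T) := by
          rcases lt_or_ge (Nat.card (Ideal (T ⧸ J))) (Nat.card (Ideal T)) with h | h
          · exact h
          · exact absurd (hcomapinj.bijective_of_nat_card_le h).2 hnotsurj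
        omega
      -- residue field of T ⧸ J is finite
      have hres' : Finite ((T ⧸ J) ⧸ maximalIdeal (T ⧸ J)) := by
        let σ : T →+* ResidueField (T ⧸ J) := (residue (T ⧸ J)).comp (Ideal.Quotient.mk J)
        have hσ : Function.Surjective σ :=
          (residue_surjective).comp Ideal.Quotient.mk_surjective
        have hker : RingHom.ker σ = maximalIdeal T := IsLocalRing.ker_eq_maximalIdeal σ hσ
        have e := RingHom.quotientKerEquivOfSurjective hσ
        replace e := (Ideal.quotEquivOfEq hker.symm).trans e
        exact Finite.of_surjective e e.surjective
      have := ih (T ⧸ J) hfin' hcard hres'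
      -- conclude T finite from T/J and J finite
      have hsurj2 : Function.Surjective (fun p : (T ⧸ J) × J => p.1.out + (p.2 : T)) := by
        intro t
        refine ⟨⟨Ideal.Quotient.mk J t, ⟨t - (Ideal.Quotient.mk J t).out, ?_⟩⟩, ?_⟩
        · have : (Ideal.Quotient.mk J t).out - t ∈ J := by
            rw [← Ideal.Quotient.eq]; exact Quotient.out_eq _
          simpa using J.neg_mem this
        · show (Ideal.Quotient.mk J t).out + (t - (Ideal.Quotient.mk J t).out) = t
          ring
      exact Finite.of_surjective _ hsurj2

end Chunk2

section Chunk3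

open Finset in
lemma field_case (k : Type*) [Field k] (n : ℕ) : Finite (Subalgebra k (Fin n → k)) := by
  classical
  set rel : Subalgebra k (Fin n → k) → Set (Fin n × Fin n) :=
    fun A => {p | ∀ x ∈ A, x p.1 = x p.2} with hrel
  have recon : ∀ (A : Subalgebra k (Fin n → k)) (x : Fin n → k),
      (∀ p ∈ rel A, x p.1 = x p.2) → x ∈ A := by
    intro A x hx
    -- the idempotents of the partition belong to A
    have heA : ∀ i : Fin n, (fun j => if (i, j) ∈ rel A then (1:k) else 0) ∈ A := by
      intro i
      set s : Finset (Fin n) := Finset.univ.filter (fun j => (i, j) ∉ rel A) with hs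
      have hch : ∀ j : Fin n, (i, j) ∉ rel A → ∃ y, y ∈ A ∧ y i ≠ y j := by
        intro j hj
        by_contra hcon
        push_neg at hcon
        exact hj (fun y hy => hcon y hy)
      set w : Fin n → (Fin n → k) := fun j =>
        if h : (i, j) ∉ rel A then (hch j h).choose else 1 with hw
      have hwA : ∀ j, w j ∈ A := by
        intro j
        by_cases h : (i, j) ∉ rel A
        · simp only [hw, dif_pos h]; exact (hch j h).choose_spec.1
        · simp only [hw, dif_neg h]; exact A.one_mem
      have hwne : ∀ j ∈ s, w j i ≠ w j j := by
        intro j hj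
        rw [hs, Finset.mem_filter] at hj
        simp only [hw, dif_pos hj.2]
        exact (hch j hj.2).choose_spec.2
      set z : Fin n → k := ∏ j ∈ s, (w j - (w j j) • (1 : Fin n → k)) with hz
      have hzA : z ∈ A := by
        refine A.prod_mem (fun j _ => ?_)
        exact A.sub_mem (hwA j) (A.smul_mem A.one_mem _)
      set v : k := ∏ j ∈ s, (w j i - w j j) with hv
      have hvne : v ≠ 0 := by
        refine Finset.prod_ne_zero_iff.mpr (fun j hj => ?_)
        exact sub_ne_zero_of_ne (hwne j hj)
      have hzval : ∀ m, z m = if (i, m) ∈ rel A then v else 0 := by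
        intro m
        have : z m = ∏ j ∈ s, (w j m - w j j) := by
          rw [hz, Finset.prod_apply]
          simp
        rw [this]
        by_cases hm : (i, m) ∈ rel A
        · rw [if_pos hm, hv]
          refine Finset.prod_congr rfl (fun j _ => ?_)
          have : w j i = w j m := hm (w j) (hwA j)
          rw [this]
        · rw [if_neg hm]
          refine Finset.prod_eq_zero (Finset.mem_filter.mpr ⟨Finset.mem_univ m, hm⟩) ?_
          ring
      have : (fun j => if (i, j) ∈ rel A then (1:k) else 0) = v⁻¹ • z := by
        funext m
        simp only [Pi.smul_apply, smul_eq_mul, hzval m]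
        by_cases hm : (i, m) ∈ rel A <;> simp [hm, inv_mul_cancel₀ hvne]
      rw [this]
      exact A.smul_mem hzA _
    -- transversal
    have hrefl : ∀ i : Fin n, (i, i) ∈ rel A := fun i x _ => rfl
    set f : Fin n → Fin n := fun i =>
      (Finset.univ.filter (fun j => (i, j) ∈ rel A)).min' ⟨i, Finset.mem_filter.mpr ⟨Finset.mem_univ i, hrefl i⟩⟩ with hf
    have hfr : ∀ i, (i, f i) ∈ rel A := by
      intro i
      have := Finset.min'_mem (Finset.univ.filter (fun j => (i, j) ∈ rel A))
        ⟨i, Finset.mem_filter.mpr ⟨Finset.mem_univ i, hrefl i⟩⟩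
      exact (Finset.mem_filter.mp this).2
    have hfconst : ∀ i m, (i, m) ∈ rel A → f i = f m := by
      intro i m him
      have hsets : (Finset.univ.filter (fun j => (i, j) ∈ rel A)) =
          (Finset.univ.filter (fun j => (m, j) ∈ rel A)) := by
        ext j
        simp only [Finset.mem_filter, Finset.mem_univ, true_and]
        constructor
        · intro hij y hy; rw [← him y hy]; exact hij y hy
        · intro hmj y hy; rw [him y hy]; exact hmj y hy
      simp only [hf]
      congr 1
    have hx2 : x = ∑ j ∈ Finset.univ.image f, (x j) • (fun m => if (j, m) ∈ rel A then (1:k) else 0) := by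
      funext m
      rw [Finset.sum_apply]
      rw [Finset.sum_eq_single (f m)]
      · have hfm : (f m, m) ∈ rel A := fun y hy => ((hfr m) y hy).symm
        simp only [Pi.smul_apply, smul_eq_mul, if_pos hfm, mul_one]
        exact (hx _ hfm).symm
      · intro j hj hjne
        rw [Finset.mem_image] at hj
        obtain ⟨i', _, rfl⟩ := hj
        have : (f i', m) ∉ rel A := by
          intro hmem
          have h1 : (i', m) ∈ rel A := by
            intro y hy
            rw [hfr i' y hy]; exact hmem y hy
          exact hjne (hfconst i' m h1)
        simp [this]
      · intro hnotmem
        exact absurd (Finset.mem_image_of_mem f (Finset.mem_univ m)) hnotmem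
    rw [hx2]
    exact A.sum_mem (fun j _ => A.smul_mem (heA j) _)
  have hinj : Function.Injective rel := by
    intro A B h
    have key : ∀ A B : Subalgebra k (Fin n → k), rel A = rel B → A ≤ B := by
      intro A B h x hxA
      refine recon B x ?_
      intro p hp
      rw [← h] at hp
      exact hp x hxA
    exact le_antisymm (key A B h) (key B A h.symm)
  exact Finite.of_injective rel hinj

end Chunk3

section Chunk4
open IsLocalRing
variable {T : Type u} [CommRing T] [IsLocalRing T]


/-- An infinite local ring with finitely many ideals which is not a field is an SPIR. -/
lemma spir_of_local (hfin : Finite (Ideal T)) (hinf : Infinite T) (hnf : ¬ IsField T) :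
    IsSPIR T (maximalIdeal T) := by
  classical
  set M := maximalIdeal T with hMdef
  have hM : M ≠ ⊥ := fun h => hnf (isField_iff_maximalIdeal_eq.mpr h)
  haveI : IsNoetherian T T := isNoetherian_mk ⟨Finite.to_wellFoundedGT.wf⟩
  have hMfg : M.FG := IsNoetherian.noetherian M
  have hjac : M ≤ Ideal.jacobson ⊥ := by
    rw [IsLocalRing.jacobson_eq_maximalIdeal ⊥ bot_ne_top]
  have hkinf : Infinite (T ⧸ M) := by
    rw [← not_finite_iff_infinite]
    intro hres
    have := finite_of_finite_residue (Nat.card (Ideal T)) T hfin le_rfl hres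
    exact not_finite T
  have hMM : M ≠ M • M := by
    intro h
    exact hM (Submodule.eq_bot_of_le_smul_of_le_jacobson_bot M M hMfg h.le hjac)
  have hMMle : M • M ≤ M := Submodule.smul_le_right
  obtain ⟨x, hxM, hxMM⟩ := SetLike.exists_of_lt (lt_of_le_of_ne hMMle (fun h => hMM h.symm))
  have hprin : M = Ideal.span {x} := by
    by_cases hca : M ≤ Ideal.span {x} ⊔ M • M
    · exact le_antisymm (Submodule.le_of_le_smul_of_le_jacobson_bot hMfg hjac hca)
        ((Ideal.span_le).mpr (by simpa using hxM))
    · exfalso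
      obtain ⟨y, hyM, hy⟩ := SetLike.not_le_iff_exists.mp hca
      set F : T → Ideal T := fun c => Ideal.span {y + c * x} ⊔ M • M with hF
      have key : ∀ c d : T, F c = F d → c - d ∈ M := by
        intro c d h
        have hmem : y + d * x ∈ F c := by
          rw [h]
          exact Submodule.mem_sup_left (Ideal.mem_span_singleton_self _)
        rw [hF] at hmem
        obtain ⟨z, hz, m, hm, hzm⟩ := Submodule.mem_sup.mp hmem
        obtain ⟨e, he⟩ := Ideal.mem_span_singleton'.mp hz
        have heq : (1 - e) * y = (e * c - d) * x + m := by linear_combination -hzm - he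
        have hnu : ¬ IsUnit (1 - e) := by
          intro hu
          apply hy
          have hyval : y = ↑hu.unit⁻¹ * ((e * c - d) * x + m) := by
            have h2 : (↑hu.unit⁻¹ : T) * ((1 - e) * y) = y := by
              rw [← mul_assoc, IsUnit.val_inv_mul, one_mul]
            rw [← h2, heq]
          rw [hyval, mul_add]
          refine Submodule.add_mem _ ?_ ?_
          · exact Submodule.mem_sup_left (by
              rw [Ideal.mem_span_singleton]
              exact ⟨↑hu.unit⁻¹ * (e * c - d), by ring⟩)
          · exact Submodule.mem_sup_right (Ideal.mul_mem_left _ _ hm)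
        have hem : 1 - e ∈ M := IsLocalRing.mem_maximalIdeal _ |>.mpr hnu
        have hdx : (d - e * c) * x ∈ M • M := by
          have h1 : (d - e * c) * x = (e - 1) * y + m := by linear_combination heq
          have h2 : (e - 1) * y ∈ M • M := by
            have : e - 1 ∈ M := by simpa using M.neg_mem hem
            exact Submodule.smul_mem_smul this hyM
          rw [h1]
          exact Submodule.add_mem _ h2 hm
        have hdc : d - e * c ∈ M := by
          by_contra hcon
          have hu : IsUnit (d - e * c) := by
            by_contra hnu2
            exact hcon (IsLocalRing.mem_maximalIdeal _ |>.mpr hnu2)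
          apply hxMM
          have : x = ↑hu.unit⁻¹ * ((d - e * c) * x) := by
            rw [← mul_assoc, IsUnit.val_inv_mul, one_mul]
          rw [this]
          exact Ideal.mul_mem_left _ _ hdx
        have : c - d = c * (1 - e) - (d - e * c) := by ring
        rw [this]
        exact Submodule.sub_mem _ (Ideal.mul_mem_left _ _ hem) hdc
      have hginj : Function.Injective (fun z : T ⧸ M => F z.out) := by
        intro z w h
        have := key _ _ h
        rw [← Quotient.out_eq z, ← Quotient.out_eq w]
        exact Ideal.Quotient.eq.mpr this
      haveI : Infinite (Ideal T) := Infinite.of_injective _ hginj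
      exact not_finite (Ideal T)
  -- nilpotency
  haveI : IsArtinianRing T := (isArtinian_iff T T).mpr Finite.to_wellFoundedLT.wf
  obtain ⟨p, hp⟩ := IsArtinianRing.isNilpotent_jacobson_bot (R := T)
  rw [IsLocalRing.jacobson_eq_maximalIdeal ⊥ bot_ne_top] at hp
  have hp' : M ^ p = ⊥ := by rw [← Ideal.zero_eq_bot, ← hp]
  have hppos : 0 < p := by
    rcases Nat.eq_zero_or_pos p with h0 | h
    · exfalso
      rw [h0, pow_zero, Ideal.one_eq_top] at hp'
      have : (1 : T) ∈ (⊥ : Ideal T) := hp' ▸ Submodule.mem_top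
      simpa using this
    · exact h
  have hPIR : IsPrincipalIdealRing T := by
    constructor
    intro I
    by_cases hI : I = ⊥
    · exact ⟨⟨0, by rw [hI, Submodule.span_zero_singleton]⟩⟩
    · have hex : ∃ i, ¬ I ≤ M ^ i := by
        refine ⟨p, ?_⟩
        rw [hp', le_bot_iff]
        exact hI
      set j := Nat.find hex with hj
      have hjpos : 0 < j := by
        rcases Nat.eq_zero_or_pos j with h0 | h
        · exfalso
          have := Nat.find_spec hex
          rw [← hj, h0, pow_zero, Ideal.one_eq_top] at this
          exact this le_top
        · exact h
      have hle : I ≤ M ^ (j - 1) := not_not.mp (Nat.find_min hex (Nat.sub_lt hjpos one_pos))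
      have hnot : ¬ I ≤ M ^ j := Nat.find_spec hex
      obtain ⟨z, hzI, hzM⟩ := SetLike.not_le_iff_exists.mp hnot
      have hzin : z ∈ Ideal.span {x ^ (j - 1)} := by
        rw [← Ideal.span_singleton_pow, ← hprin]
        exact hle hzI
      obtain ⟨c, hc⟩ := Ideal.mem_span_singleton'.mp hzin
      have hcu : IsUnit c := by
        by_contra hnu
        apply hzM
        have hcM : c ∈ M := IsLocalRing.mem_maximalIdeal _ |>.mpr hnu
        have hz2 : z ∈ M ^ (j - 1) * M := by
          rw [← hc, mul_comm c]
          exact Ideal.mul_mem_mul (Ideal.pow_mem_pow hxM _) hcM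
        have hj1 : (j - 1) + 1 = j := Nat.succ_pred_eq_of_pos hjpos
        rw [← hj1, pow_succ]
        exact hz2
      have hxj : x ^ (j - 1) ∈ I := by
        have h5 : (↑hcu.unit⁻¹ : T) * z = x ^ (j - 1) := by
          rw [← hc, ← mul_assoc, IsUnit.val_inv_mul, one_mul]
        rw [← h5]
        exact I.mul_mem_left _ hzI
      refine ⟨⟨x ^ (j - 1), le_antisymm ?_ ?_⟩⟩
      · show I ≤ Ideal.span {x ^ (j - 1)}
        rw [← Ideal.span_singleton_pow, ← hprin]
        exact hle
      · show Ideal.span {x ^ (j - 1)} ≤ I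
        rw [Ideal.span_le]
        simpa using hxj
  refine ⟨hPIR, hnf, (maximalIdeal.isMaximal T).isPrime, hM, ?_, ⟨p, hppos, hp'⟩⟩
  intro P hP hPne
  haveI := hP
  have hmax := IsArtinianRing.isMaximal_of_isPrime P
  exact IsLocalRing.eq_maximalIdeal hmax

end Chunk4

section Chunk5
open IsLocalRing



lemma infinite_sa_of_spir (T : Type u) [CommRing T] [IsLocalRing T]
    (hfin : Finite (Ideal T)) (hinf : Infinite T)
    (hspir : IsSPIR T (maximalIdeal T)) {n : ℕ} (hn : 3 ≤ n) :
    Infinite (Subalgebra T (Fin n → T)) := by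
  classical
  obtain ⟨hPIR, hnf, _, hMne, _, p, hppos, hpbot⟩ := hspir
  set M := maximalIdeal T with hMdef
  have hkinf : Infinite (T ⧸ M) := by
    rw [← not_finite_iff_infinite]
    intro hres
    have := finite_of_finite_residue (Nat.card (Ideal T)) T hfin le_rfl hres
    exact not_finite T
  obtain ⟨t, ht0⟩ := (IsPrincipalIdealRing.principal M).principal
  have ht : M = Ideal.span {t} := ht0
  have hq : ∃ q, M ^ q = ⊥ := ⟨p, hpbot⟩
  set q := Nat.find hq with hqdef
  have hqspec : M ^ q = ⊥ := Nat.find_spec hq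
  have hq2 : 2 ≤ q := by
    by_contra hlt
    interval_cases q
    · rw [pow_zero, Ideal.one_eq_top] at hqspec
      have : (1 : T) ∈ (⊥ : Ideal T) := hqspec ▸ Submodule.mem_top
      simpa using this
    · rw [pow_one] at hqspec
      exact hMne hqspec
  have hqm : M ^ (q - 1) ≠ ⊥ := Nat.find_min hq (Nat.sub_lt (by omega) one_pos)
  set u : T := t ^ (q - 1) with hu
  have hMq : M ^ (q - 1) = Ideal.span {u} := by
    rw [ht, Ideal.span_singleton_pow]
  have hu0 : u ≠ 0 := by
    intro h
    rw [h, Ideal.span_singleton_eq_bot.mpr rfl] at hMq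
    exact hqm hMq
  have htq : t ^ q = 0 := by
    have : t ^ q ∈ M ^ q := by
      rw [ht, Ideal.span_singleton_pow]
      exact Ideal.mem_span_singleton_self _
    rw [hqspec] at this
    simpa using this
  have huu : u * u = 0 := by
    rw [hu, ← pow_add]
    have : q - 1 + (q - 1) = q + (q - 2) := by omega
    rw [this, pow_add, htq, zero_mul]
  have hann : ∀ a : T, a * u = 0 ↔ a ∈ M := by
    intro a
    constructor
    · intro h
      by_contra hna
      have hau : IsUnit a := by
        by_contra h2
        exact hna (IsLocalRing.mem_maximalIdeal a |>.mpr h2)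
      apply hu0
      have : u = ↑hau.unit⁻¹ * (a * u) := by rw [← mul_assoc, IsUnit.val_inv_mul, one_mul]
      rw [this, h, mul_zero]
    · intro h
      rw [ht, Ideal.mem_span_singleton'] at h
      obtain ⟨c, rfl⟩ := h
      have : c * t * u = c * t ^ q := by
        rw [hu, mul_assoc, ← pow_succ']
        congr 2
        omega
      rw [this, htq, mul_zero]
  -- the three distinguished indices
  have h0 : 0 < n := by omega
  have h1 : 1 < n := by omega
  have h2 : 2 < n := by omega
  set i0 : Fin n := ⟨0, h0⟩
  set i1 : Fin n := ⟨1, h1⟩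
  set i2 : Fin n := ⟨2, h2⟩
  set v : T → (Fin n → T) := fun a i => if i = i0 then u else if i = i1 then a * u else 0 with hv
  have hvv : ∀ a, v a * v a = 0 := by
    intro a
    funext i
    show v a i * v a i = 0
    by_cases e0 : i = i0
    · simp [hv, e0, huu]
    · by_cases e1 : i = i1
      · simp only [hv, e1]
        norm_num [show ¬ (i1 = i0) from by simp [i0, i1, Fin.ext_iff]]
        linear_combination (a * a) * huu
      · simp [hv, e0, e1]
  set A : T →+* (Fin n → T) := algebraMap T (Fin n → T) with hA
  set S : T → Subalgebra T (Fin n → T) := fun a =>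
    { carrier := {w | ∃ c d : T, w = A c + A d * v a}
      mul_mem' := by
        rintro w w' ⟨c, d, rfl⟩ ⟨c', d', rfl⟩
        refine ⟨c * c', c * d' + d * c', ?_⟩
        have expand : (A c + A d * v a) * (A c' + A d' * v a) =
            A (c * c') + A (c * d' + d * c') * v a + (A (d * d')) * (v a * v a) := by
          simp only [map_mul, map_add]
          ring
        rw [expand, hvv, mul_zero, add_zero]
      add_mem' := by
        rintro w w' ⟨c, d, rfl⟩ ⟨c', d', rfl⟩
        exact ⟨c + c', d + d', by simp only [map_add]; ring⟩
      algebraMap_mem' := fun r => ⟨r, 0, by simp [hA]⟩ } with hS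
  have hva : ∀ a b : T, a - b ∈ M → v a = v b := by
    intro a b hab
    funext i
    by_cases e0 : i = i0
    · simp [hv, e0]
    · by_cases e1 : i = i1
      · simp only [hv, e1]
        norm_num [show ¬ (i1 = i0) from by simp [i0, i1, Fin.ext_iff]]
        have : (a - b) * u = 0 := (hann _).mpr hab
        linear_combination this
      · simp [hv, e0, e1]
  have hkey : ∀ a b : T, S a = S b → a - b ∈ M := by
    intro a b h
    have hvb : v b ∈ S a := by
      rw [h]
      exact ⟨0, 1, by simp⟩
    obtain ⟨c, d, hcd⟩ := hvb
    have hne10 : ¬ (i1 = i0) := by simp [i0, i1, Fin.ext_iff]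
    have hne20 : ¬ (i2 = i0) := by simp [i0, i2, Fin.ext_iff]
    have hne21 : ¬ (i2 = i1) := by simp [i1, i2, Fin.ext_iff]
    have h02 : v b i2 = c + d * v a i2 := congrFun hcd i2
    have hc0 : c = 0 := by
      simp [hv, hne20, hne21] at h02
      exact h02.symm
    have h00 : v b i0 = c + d * v a i0 := congrFun hcd i0
    have hd1 : d - 1 ∈ M := by
      simp only [hv, if_pos rfl] at h00
      rw [← hann]
      have : u = c + d * u := h00
      rw [hc0] at this
      linear_combination -this
    have h01 : v b i1 = c + d * v a i1 := congrFun hcd i1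
    simp only [hv, hne10, if_neg, if_pos rfl, ite_false, ite_true] at h01
    rw [← neg_mem_iff, neg_sub, ← hann]
    have hd1u : (d - 1) * u = 0 := (hann _).mpr hd1
    have : b * u = c + d * (a * u) := by
      convert h01 using 2 <;> simp [hne10]
    rw [hc0] at this
    linear_combination this + a * hd1u
  have hconst : ∀ a b : T, a - b ∈ M → S a = S b := by
    intro a b hab
    have := hva a b hab
    simp only [hS, this]
  have hinj2 : Function.Injective (fun z : T ⧸ M => S z.out) := by
    intro z w h
    have := hkey _ _ h
    rw [← Quotient.out_eq z, ← Quotient.out_eq w]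
    exact Ideal.Quotient.eq.mpr this
  exact Infinite.of_injective _ hinj2

end Chunk5

section Chunk6

variable {R : Type*} [CommRing R]

/-- If `R ⊆ R^n` has finitely many intermediate algebras, so does the localization. -/
lemma finite_sa_localization (M : Ideal R) [M.IsPrime] (n : ℕ)
    (h : Finite (Subalgebra R (Fin n → R))) :
    Finite (Subalgebra (Localization.AtPrime M) (Fin n → Localization.AtPrime M)) := by
  classical
  set T := Localization.AtPrime M with hT
  set φ : (Fin n → R) →ₐ[R] (Fin n → T) :=
    Pi.algHom R _ (fun i => (IsScalarTower.toAlgHom R R T).comp (Pi.evalAlgHom R (fun _ => R) i))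
    with hφ
  have hφval : ∀ (x : Fin n → R) (i : Fin n), φ x i = algebraMap R T (x i) := by
    intro x i; rfl
  set ρ : Subalgebra T (Fin n → T) → Subalgebra R (Fin n → R) :=
    fun B => (B.restrictScalars R).comap φ with hρ
  have key : ∀ B B' : Subalgebra T (Fin n → T), ρ B = ρ B' → B ≤ B' := by
    intro B B' hBB x hx
    obtain ⟨b, hb⟩ := IsLocalization.exist_integer_multiples M.primeCompl Finset.univ x
    have hr : ∀ i : Fin n, ∃ ri : R, algebraMap R T ri = (b : R) • x i := by
      intro i
      obtain ⟨ri, hri⟩ := hb i (Finset.mem_univ i)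
      exact ⟨ri, hri⟩
    choose r hrspec using hr
    set w : Fin n → T := fun i => algebraMap R T (b : R) * x i with hw
    have hwB : w ∈ B := by
      have : w = algebraMap T (Fin n → T) (algebraMap R T (b : R)) * x := by
        funext i; rfl
      rw [this]
      exact B.mul_mem (B.algebraMap_mem _) hx
    have hrw : φ r = w := by
      funext i
      rw [hφval, hrspec i, hw, Algebra.smul_def]
    have hrmem : r ∈ ρ B := by
      show φ r ∈ B.restrictScalars R
      rw [hrw]
      exact hwB
    rw [hBB] at hrmem
    have hwB' : w ∈ B' := by
      have : φ r ∈ B'.restrictScalars R := hrmem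
      rwa [hrw] at this
    have hbu : IsUnit (algebraMap R T (b : R)) := IsLocalization.map_units T b
    have hxw : x = algebraMap T (Fin n → T) ↑hbu.unit⁻¹ * w := by
      funext i
      show x i = ↑hbu.unit⁻¹ * (algebraMap R T (b : R) * x i)
      rw [← mul_assoc, IsUnit.val_inv_mul, one_mul]
    rw [hxw]
    exact B'.mul_mem (B'.algebraMap_mem _) hwB'
  have hinj : Function.Injective ρ := fun B B' h =>
    le_antisymm (key B B' h) (key B' B h.symm)
  exact Finite.of_injective ρ hinj

end Chunk6

section Chunk7

/-- Subrings of `R^n` containing the diagonal. -/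
def DiagSub (R : Type*) [CommRing R] (n : ℕ) : Type _ :=
  {B : Subring (Fin n → R) // ∀ r : R, (fun _ => r) ∈ B}

variable {R : Type*} [CommRing R] {n : ℕ}

lemma algebraMap_pi_eq (r : R) : algebraMap R (Fin n → R) r = fun _ => r := rfl

lemma finite_sa_of_finite_diag (h : Finite (DiagSub R n)) :
    Finite (Subalgebra R (Fin n → R)) := by
  set f : Subalgebra R (Fin n → R) → DiagSub R n :=
    fun A => ⟨A.toSubring, fun r => by
      have := A.algebraMap_mem r
      rwa [algebraMap_pi_eq] at this⟩ with hf
  have hinj : Function.Injective f := by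
    intro A B hAB
    have : A.toSubring = B.toSubring := congrArg Subtype.val hAB
    exact Subalgebra.toSubring_injective this
  exact Finite.of_injective f hinj

lemma finite_diag_of_finite_sa (h : Finite (Subalgebra R (Fin n → R))) :
    Finite (DiagSub R n) := by
  set g : DiagSub R n → Subalgebra R (Fin n → R) := fun B =>
    { toSubsemiring := B.1.toSubsemiring
      algebraMap_mem' := fun r => by
        rw [algebraMap_pi_eq]
        exact B.2 r } with hg
  have hinj : Function.Injective g := by
    intro B B' hBB
    apply Subtype.ext
    apply SetLike.coe_injective
    have : (g B : Set (Fin n → R)) = (g B' : Set (Fin n → R)) := by rw [hBB]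
    exact this
  exact Finite.of_injective g hinj

/-- transport along a ring isomorphism -/
lemma finite_diag_of_ringEquiv {S : Type*} [CommRing S] (e : R ≃+* S)
    (h : Finite (DiagSub S n)) : Finite (DiagSub R n) := by
  set E : (Fin n → R) ≃+* (Fin n → S) := RingEquiv.piCongrRight (fun _ => e) with hE
  set f : DiagSub R n → DiagSub S n := fun B =>
    ⟨B.1.comap (E.symm : (Fin n → S) →+* (Fin n → R)), fun s => by
      show E.symm (fun _ => s) ∈ B.1
      have : E.symm (fun _ => s) = fun _ => e.symm s := rfl
      rw [this]
      exact B.2 _⟩ with hf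
  have hinj : Function.Injective f := by
    intro B B' hBB
    apply Subtype.ext
    ext x
    have hx : x = E.symm (E x) := (E.symm_apply_apply x).symm
    constructor
    · intro hxB
      have : E x ∈ (f B).1 := by show E.symm (E x) ∈ B.1; rw [← hx]; exact hxB
      rw [hBB] at this
      have h2 : E.symm (E x) ∈ B'.1 := this
      rwa [← hx] at h2
    · intro hxB
      have : E x ∈ (f B').1 := by show E.symm (E x) ∈ B'.1; rw [← hx]; exact hxB
      rw [← hBB] at this
      have h2 : E.symm (E x) ∈ B.1 := this
      rwa [← hx] at h2
  exact Finite.of_injective f hinj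

/-- decomposition over a finite product of rings -/
lemma finite_diag_pi {ι : Type*} [Finite ι] (S : ι → Type*) [∀ i, CommRing (S i)]
    (h : ∀ i, Finite (DiagSub (S i) n)) : Finite (DiagSub (∀ i, S i) n) := by
  classical
  haveI := Fintype.ofFinite ι
  set π : ∀ i : ι, (Fin n → ∀ j, S j) →+* (Fin n → S i) := fun i =>
    Pi.ringHom (fun m => (Pi.evalRingHom S i).comp (Pi.evalRingHom (fun _ : Fin n => ∀ j, S j) m))
    with hπ
  set f : DiagSub (∀ i, S i) n → ∀ i, DiagSub (S i) n := fun B i =>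
    ⟨B.1.map (π i), fun s => by
      refine ⟨fun _ => Pi.single i s, B.2 _, ?_⟩
      funext m
      show Pi.single i s i = s
      simp⟩ with hf
  have key : ∀ B B' : DiagSub (∀ i, S i) n, f B = f B' → ∀ x, x ∈ B.1 → x ∈ B'.1 := by
    intro B B' hBB x hx
    have hyi : ∀ i : ι, ∃ y, y ∈ B'.1 ∧ π i y = π i x := by
      intro i
      have : π i x ∈ (f B i).1 := ⟨x, hx, rfl⟩
      rw [hBB] at this
      obtain ⟨y, hy, hyx⟩ := this
      exact ⟨y, hy, hyx⟩
    choose y hyB hyx using hyi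
    have hxsum : x = ∑ i : ι, ((fun _ => Pi.single i (1 : S i)) : Fin n → ∀ j, S j) * y i := by
      funext m j
      have hsum : (∑ i : ι, ((fun _ => Pi.single i (1 : S i)) : Fin n → ∀ j, S j) * y i) m j
          = ∑ i : ι, (Pi.single i (1 : S i) j) * (y i m j) := by
        rw [Finset.sum_apply, Finset.sum_apply]
        rfl
      rw [hsum, Finset.sum_eq_single j]
      · have : y j m j = π j (y j) m := rfl
        rw [Pi.single_eq_same, one_mul, this, hyx j]
        rfl
      · intro i _ hij
        rw [Pi.single_eq_of_ne' hij, zero_mul]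
      · intro hj
        exact absurd (Finset.mem_univ j) hj
    rw [hxsum]
    refine Subring.sum_mem _ (fun i _ => Subring.mul_mem _ (B'.2 _) (hyB i))
  have hinj : Function.Injective f := by
    intro B B' hBB
    apply Subtype.ext
    ext x
    exact ⟨fun hx => key B B' hBB x hx, fun hx => key B' B hBB.symm x hx⟩
  exact Finite.of_injective f hinj

end Chunk7

section Chunk8
open IsLocalRing



lemma finite_ideal_localization {R : Type*} [CommRing R] (M : Submonoid R)
    (h : Finite (Ideal R)) : Finite (Ideal (Localization M)) :=
  Finite.of_injective _ (IsLocalization.orderEmbedding M (Localization M)).injective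

lemma local_case (T : Type u) [CommRing T] [IsLocalRing T] (hfin : Finite (Ideal T))
    (h : ¬(Infinite T ∧ IsSPIR T (maximalIdeal T))) (n : ℕ) :
    Finite (Subalgebra T (Fin n → T)) := by
  by_cases hT : Finite T
  · haveI : Finite (Fin n → T) := Pi.finite
    exact Finite.of_injective (fun A : Subalgebra T (Fin n → T) => (A : Set (Fin n → T)))
      SetLike.coe_injective
  · haveI : Infinite T := not_finite_iff_infinite.mp hT
    have hf : IsField T := by
      by_contra hnf
      exact h ⟨inferInstance, spir_of_local hfin inferInstance hnf⟩
    letI := hf.toField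
    exact field_case T n

lemma backward_decomp (R : Type u) [CommRing R] [Nontrivial R] (hfinI : Finite (Ideal R)) (n : ℕ)
    (hloc : ∀ (I : Ideal R) (hI : I.IsMaximal),
      Finite (Subalgebra (Localization (@Ideal.primeCompl R _ I hI.isPrime))
        (Fin n → Localization (@Ideal.primeCompl R _ I hI.isPrime)))) :
    Finite (Subalgebra R (Fin n → R)) := by
  classical
  haveI : Finite (Submodule R R) := hfinI
  haveI : IsArtinianRing R := (isArtinian_iff R R).mpr Finite.to_wellFoundedLT.wf
  haveI : IsNoetherian R R := isNoetherian_mk ⟨Finite.to_wellFoundedGT.wf⟩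
  set ι := {I : Ideal R // I.IsMaximal} with hι
  haveI : Finite ι := Subtype.finite
  set K : ι → Ideal R := fun I =>
    RingHom.ker (algebraMap R (Localization (@Ideal.primeCompl R _ I.1 I.2.isPrime))) with hK
  have surj : ∀ I : ι, Function.Surjective
      (algebraMap R (Localization (@Ideal.primeCompl R _ I.1 I.2.isPrime))) := by
    intro I
    haveI := I.2.isPrime
    exact IsArtinianRing.localization_surjective I.1.primeCompl _
  -- some power of each maximal ideal is contained in the kernel
  have hpow : ∀ I : ι, ∃ k : ℕ, k ≠ 0 ∧ I.1 ^ k ≤ K I := by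
    intro I
    haveI := I.2.isPrime
    obtain ⟨k1, k2, hne, heq⟩ : ∃ k1 k2 : ℕ, k1 ≠ k2 ∧ I.1 ^ k1 = I.1 ^ k2 := by
      obtain ⟨k1, k2, hne, heq⟩ := Finite.exists_ne_map_eq_of_infinite (fun k : ℕ => I.1 ^ k)
      exact ⟨k1, k2, hne, heq⟩
    wlog hlt : k1 < k2 generalizing k1 k2
    · exact this k2 k1 hne.symm heq.symm (by omega)
    have hstab : I.1 ^ k1 = I.1 ^ (k1 + 1) := by
      refine le_antisymm ?_ (Ideal.pow_le_pow_right (by omega))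
      calc I.1 ^ k1 = I.1 ^ k2 := heq
        _ ≤ I.1 ^ (k1 + 1) := Ideal.pow_le_pow_right (by omega)
    obtain ⟨r, hr1, hr0⟩ := Submodule.exists_sub_one_mem_and_smul_eq_zero_of_fg_of_le_smul
      I.1 (I.1 ^ k1) (IsNoetherian.noetherian _)
      (by rw [Ideal.smul_eq_mul]; nth_rewrite 1 [hstab]; rw [pow_succ'])
    have hrP : r ∈ I.1.primeCompl := by
      intro hrM
      have h1 : (1 : R) ∈ I.1 := by
        have := I.1.sub_mem hrM hr1
        simpa using this
      exact I.2.ne_top (Ideal.eq_top_iff_one _ |>.mpr h1)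
    refine ⟨k1 + 1, by omega, ?_⟩
    intro x hx
    rw [hK, RingHom.mem_ker]
    rw [IsLocalization.map_eq_zero_iff I.1.primeCompl]
    refine ⟨⟨r, hrP⟩, ?_⟩
    have hxk : x ∈ I.1 ^ k1 := by
      rw [hstab]
      exact hx
    simpa using hr0 x hxk
  have hcop : Pairwise (Function.onFun IsCoprime K) := by
    intro I J hIJ
    simp only [Function.onFun]
    rw [Ideal.isCoprime_iff_sup_eq]
    by_contra hne
    obtain ⟨P, hPmax, hPle⟩ := Ideal.exists_le_maximal _ hne
    haveI := hPmax.isPrime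
    obtain ⟨kI, hkI0, hkI⟩ := hpow I
    obtain ⟨kJ, hkJ0, hkJ⟩ := hpow J
    have hIP : I.1 ≤ P :=
      (Ideal.IsPrime.pow_le_iff hkI0).mp (hkI.trans (le_sup_left.trans hPle))
    have hJP : J.1 ≤ P :=
      (Ideal.IsPrime.pow_le_iff hkJ0).mp (hkJ.trans (le_sup_right.trans hPle))
    have : I = J := by
      apply Subtype.ext
      rw [I.2.eq_of_le hPmax.ne_top hIP, J.2.eq_of_le hPmax.ne_top hJP]
    exact hIJ this
  have hinf : (⨅ I : ι, K I) = ⊥ := by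
    refine le_antisymm ?_ bot_le
    intro x hx
    rw [Submodule.mem_bot]
    by_contra hx0
    set ann : Ideal R :=
      { carrier := {r | r * x = 0}
        zero_mem' := by simp
        add_mem' := by
          intro a b ha hb
          show (a + b) * x = 0
          have ha' : a * x = 0 := ha
          have hb' : b * x = 0 := hb
          rw [add_mul, ha', hb', add_zero]
        smul_mem' := by
          intro c a ha
          show (c * a) * x = 0
          have ha' : a * x = 0 := ha
          rw [mul_assoc, ha', mul_zero] } with hann
    have hanntop : ann ≠ ⊤ := by
      intro h
      have : (1 : R) ∈ ann := h ▸ Submodule.mem_top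
      have : (1 : R) * x = 0 := this
      rw [one_mul] at this
      exact hx0 this
    obtain ⟨P, hPmax, hPann⟩ := Ideal.exists_le_maximal ann hanntop
    haveI := hPmax.isPrime
    have hxK : x ∈ K ⟨P, hPmax⟩ := (Submodule.mem_iInf K).mp hx ⟨P, hPmax⟩
    rw [hK, RingHom.mem_ker, IsLocalization.map_eq_zero_iff P.primeCompl] at hxK
    obtain ⟨⟨s, hs⟩, hsx⟩ := hxK
    exact hs (hPann (show s ∈ ann from hsx))
  -- build the ring equivalence and conclude
  have E0 := Ideal.quotientInfRingEquivPiQuotient K hcop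
  have E1 : R ≃+* R ⧸ (⨅ I : ι, K I) :=
    (RingEquiv.quotientBot R).symm.trans (Ideal.quotEquivOfEq hinf.symm)
  have E2 : ∀ I : ι, (R ⧸ K I) ≃+*
      Localization (@Ideal.primeCompl R _ I.1 I.2.isPrime) := fun I =>
    RingHom.quotientKerEquivOfSurjective (surj I)
  have E : R ≃+* ∀ I : ι, Localization (@Ideal.primeCompl R _ I.1 I.2.isPrime) :=
    E1.trans (E0.trans (RingEquiv.piCongrRight E2))
  have hpi : Finite (DiagSub (∀ I : ι, Localization (@Ideal.primeCompl R _ I.1 I.2.isPrime)) n) :=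
    finite_diag_pi _ (fun I => finite_diag_of_finite_sa (hloc I.1 I.2))
  exact finite_sa_of_finite_diag (finite_diag_of_ringEquiv E hpi)

end Chunk8

/-- Let `R` be a ring and `n > 1`. Then the diagonal extension `R ⊆ R^n` has FIP iff
`R` has finitely many ideals and, in case `R` is a ΣFMIR, `n = 2`. -/
theorem fip_power_iff (R : Type*) [CommRing R] (n : ℕ) (hn : 1 < n) :
    Finite (Subalgebra R (Fin n → R)) ↔
      Finite (Ideal R) ∧ (IsSigmaFMIR R → n = 2) := by
  constructor
  · intro h
    refine ⟨finite_ideal_of_finite_sa hn h, ?_⟩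
    intro hsig
    by_contra hne2
    have hn3 : 3 ≤ n := by omega
    obtain ⟨hfinI, M, hM, hinfT, hspir⟩ := hsig
    haveI := hM.isPrime
    have hfinT : Finite (Ideal (Localization.AtPrime M)) := finite_ideal_localization _ hfinI
    have hinfSA := infinite_sa_of_spir (Localization.AtPrime M) hfinT hinfT hspir hn3
    have hfinSA := finite_sa_localization M n h
    exact not_finite (Subalgebra (Localization.AtPrime M) (Fin n → Localization.AtPrime M))
  · rintro ⟨hfinI, himp⟩
    by_cases hsig : IsSigmaFMIR R
    · have h2 := himp hsig
      subst h2
      exact finite_sa_two_of_finite_ideal hfinI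
    · rcases subsingleton_or_nontrivial R with hsub | hnt
      · haveI : Subsingleton (Subalgebra R (Fin n → R)) := by
          constructor
          intro A B
          apply SetLike.coe_injective
          ext x
          simp only [SetLike.mem_coe]
          constructor
          · intro _
            have : x = 0 := Subsingleton.elim _ _
            rw [this]; exact B.zero_mem
          · intro _
            have : x = 0 := Subsingleton.elim _ _
            rw [this]; exact A.zero_mem
        exact Finite.of_subsingleton
      · apply backward_decomp R hfinI n
        intro I hI
        haveI := hI.isPrime
        have hfinT : Finite (Ideal (Localization I.primeCompl)) :=
          finite_ideal_localization _ hfinI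
        refine local_case (Localization I.primeCompl) hfinT ?_ n
        rintro ⟨hinfT, hspirT⟩
        exact hsig ⟨hfinI, I, hI, hinfT, hspirT⟩
end

section
/- Let (R,M) be a ΣPIR (an infinite special principal ideal ring), let 1 < p < n be integers, and let φ : R^p → R^n be an injective R-algebra homomorphism. If n = p + 1, then the extension φ has FIP (there are only finitely many R-subalgebras of R^n containing φ(R^p)). If n ≥ 2p + 1, then the extension φ does not have FIP. -/
section Aux
variable {R : Type*} [CommRing R] {M : Ideal R}

lemma spir_nontrivial (h : IsSPIR R M) : Nontrivial R := by
  by_contra hh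
  rw [not_nontrivial_iff_subsingleton] at hh
  exact h.2.2.1.ne_top (Subsingleton.elim _ _)

lemma spir_isUnit (h : IsSPIR R M) {a : R} (ha : a ∉ M) : IsUnit a := by
  have : Nontrivial R := spir_nontrivial h
  by_contra hu
  obtain ⟨P, hPmax, hP⟩ := Ideal.exists_le_maximal (Ideal.span {a})
    (by rwa [Ne, Ideal.span_singleton_eq_top])
  have hPne : P ≠ ⊥ := Ring.ne_bot_of_isMaximal_of_not_isField hPmax h.2.1
  have := h.2.2.2.2.1 P hPmax.isPrime hPne
  exact ha (this ▸ hP (Ideal.subset_span rfl))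

lemma spir_idem (h : IsSPIR R M) {x : R} (hx : x * x = x) : x = 0 ∨ x = 1 := by
  by_cases hxM : x ∈ M
  · left
    obtain ⟨e, he, hMe⟩ := h.2.2.2.2.2
    have hpow : ∀ k, 0 < k → x ^ k = x := by
      intro k hk
      induction k with
      | zero => omega
      | succ k ih =>
        rcases Nat.eq_zero_or_pos k with rfl | hk'
        · simp
        · rw [pow_succ, ih hk', hx]
    have : x ∈ M ^ e := by
      rw [← hpow e he]
      exact Ideal.pow_mem_pow hxM e
    rwa [hMe, Ideal.mem_bot] at this
  · right
    have := spir_isUnit h hxM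
    exact (IsUnit.mul_left_cancel this (by rw [hx, mul_one])).symm

lemma spir_algHom_pi (h : IsSPIR R M) {q : ℕ} (ψ : (Fin q → R) →ₐ[R] R) :
    ∃ i, ∀ x, ψ x = x i := by
  classical
  have : Nontrivial R := spir_nontrivial h
  set s : Fin q → R := fun i => ψ (Pi.single i 1) with hs
  have hidem : ∀ i, s i * s i = s i := by
    intro i
    rw [hs, ← map_mul]
    congr 1
    ext b
    simp only [Pi.mul_apply, Pi.single_apply]
    split <;> simp
  have hsum : ∑ i, s i = 1 := by
    rw [hs, ← map_sum]
    have : (∑ i, Pi.single i 1 : Fin q → R) = 1 := by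
      ext b; simp [Finset.sum_apply, Pi.single_apply]
    rw [this, map_one]
  have horth : ∀ i i', i ≠ i' → s i * s i' = 0 := by
    intro i i' hne
    rw [hs, ← map_mul]
    have : (Pi.single i 1 : Fin q → R) * Pi.single i' 1 = 0 := by
      ext b
      simp only [Pi.mul_apply, Pi.single_apply, Pi.zero_apply]
      by_cases h1 : b = i
      · rw [if_neg (fun hh : b = i' => hne (h1.symm.trans hh)), mul_zero]
      · rw [if_neg h1, zero_mul]
    rw [this, map_zero]
  have hexists : ∃ i, s i = 1 := by
    by_contra hc
    push_neg at hc
    have : ∀ i ∈ Finset.univ, s i = 0 := by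
      intro i _
      rcases spir_idem h (hidem i) with h0 | h1
      · exact h0
      · exact absurd h1 (hc i)
    rw [Finset.sum_eq_zero this] at hsum
    exact zero_ne_one hsum
  obtain ⟨i, hi⟩ := hexists
  refine ⟨i, fun x => ?_⟩
  have hx : x = ∑ i', x i' • (Pi.single i' 1 : Fin q → R) := by
    ext b; simp [Finset.sum_apply, Pi.single_apply]
  calc ψ x = ∑ i', x i' * s i' := by
        conv_lhs => rw [hx]
        rw [map_sum]
        simp only [map_smul, smul_eq_mul]
        rfl
    _ = x i := by
        rw [Finset.sum_eq_single i, hi, mul_one]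
        · intro b _ hb
          have hb0 : s b = 0 := by
            have := horth b i hb; rwa [hi, mul_one] at this
          rw [hb0, mul_zero]
        · simp

lemma spir_exists_sigma (h : IsSPIR R M) {p n : ℕ}
    (φ : (Fin p → R) →ₐ[R] (Fin n → R)) (hφ : Function.Injective φ) :
    ∃ σ : Fin n → Fin p, (∀ x j, φ x j = x (σ j)) ∧ Function.Surjective σ := by
  have : Nontrivial R := spir_nontrivial h
  have hσ : ∀ j : Fin n, ∃ i, ∀ x, φ x j = x i := fun j =>
    spir_algHom_pi h ((Pi.evalAlgHom R (fun _ => R) j).comp φ)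
  choose σ hσ using hσ
  refine ⟨σ, fun x j => hσ j x, fun i => ?_⟩
  by_contra hc
  push_neg at hc
  have h0 : φ (Pi.single i 1) = 0 := by
    ext j
    rw [hσ j]
    simp [Pi.single_apply, (hc j).symm]
  have := hφ (h0.trans (map_zero φ).symm)
  have h1 : (Pi.single i 1 : Fin p → R) i = 1 := by simp
  rw [this] at h1
  exact one_ne_zero h1.symm

lemma spir_mem_range (h : IsSPIR R M) {p n : ℕ}
    (φ : (Fin p → R) →ₐ[R] (Fin n → R)) {σ : Fin n → Fin p}
    (hσ : ∀ x j, φ x j = x (σ j)) (hsurj : Function.Surjective σ) (y : Fin n → R) :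
    y ∈ φ.range ↔ ∀ a b, σ a = σ b → y a = y b := by
  constructor
  · rintro ⟨x, rfl⟩ a b hab
    show φ x a = φ x b
    rw [hσ x a, hσ x b, hab]
  · intro hy
    refine ⟨fun i => y (Function.surjInv hsurj i), ?_⟩
    show φ _ = y
    ext j
    rw [hσ]
    exact hy _ _ (Function.rightInverse_surjInv hsurj (σ j))

lemma spir_finite_ideals (h : IsSPIR R M) : Finite (Ideal R) := by
  classical
  obtain ⟨e, he, hMe⟩ := h.2.2.2.2.2
  obtain ⟨t, ht⟩ := (h.1.principal M)
  have key : ∀ I : Ideal R, ∃ k : Fin (e + 1), I = M ^ (k : ℕ) := by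
    intro I
    obtain ⟨a, ha⟩ := h.1.principal I
    rcases eq_or_ne a 0 with rfl | ha0
    · refine ⟨⟨e, by omega⟩, ?_⟩
      simp only [ha]
      rw [hMe]
      simp
    · have hex : ∃ k, a ∉ M ^ k := ⟨e, by rw [hMe]; simpa using ha0⟩
      set K := Nat.find hex with hK
      have hK0 : K ≠ 0 := by
        intro h0
        have := Nat.find_spec hex
        rw [← hK] at this
        rw [h0] at this
        simp at this
      have hKe : K ≤ e := Nat.find_le (by rw [hMe]; simpa using ha0)
      have haK : a ∈ M ^ (K - 1) := by
        by_contra hc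
        have hle : Nat.find hex ≤ K - 1 := Nat.find_le hc
        omega
      have hnK : a ∉ M ^ K := Nat.find_spec hex
      rw [ht, Ideal.submodule_span_eq, Ideal.span_singleton_pow] at haK hnK
      obtain ⟨c, hc⟩ := Ideal.mem_span_singleton'.mp haK
      have hcM : c ∉ M := by
        intro hcm
        apply hnK
        rw [ht] at hcm
        obtain ⟨d, hd⟩ := Ideal.mem_span_singleton'.mp hcm
        rw [Ideal.mem_span_singleton']
        refine ⟨d, ?_⟩
        have : K = (K - 1) + 1 := by omega
        rw [this, pow_succ, ← hc, ← hd]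
        ring
      have hcu : IsUnit c := spir_isUnit h hcM
      refine ⟨⟨K - 1, by omega⟩, ?_⟩
      simp only [ha, ht, Ideal.submodule_span_eq, Ideal.span_singleton_pow]
      rw [← hc, Ideal.span_singleton_mul_left_unit hcu]
  choose f hf using key
  exact Finite.of_injective f (fun I J hIJ => by rw [hf I, hf J, hIJ])

lemma spir_finite_of_quot (h : IsSPIR R M) (hfin : Finite (R ⧸ M)) : Finite R := by
  classical
  obtain ⟨e, he, hMe⟩ := h.2.2.2.2.2
  obtain ⟨t, ht⟩ := h.1.principal M
  have ht' : M = Ideal.span {t} := ht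
  have step : ∀ k : ℕ, Finite (R ⧸ (M ^ (k + 1) : Ideal R)) := by
    intro k
    induction k with
    | zero => exact Finite.of_equiv _ (Ideal.quotEquivOfEq (pow_one M).symm).toEquiv
    | succ k ih =>
      have hle : (M ^ (k + 2) : Ideal R) ≤ M ^ (k + 1) :=
        Ideal.pow_le_pow_right (by omega)
      set q : R ⧸ (M ^ (k + 2) : Ideal R) →+* R ⧸ (M ^ (k + 1) : Ideal R) :=
        Ideal.Quotient.factor hle with hq
      -- the auxiliary linear map G : R⧸M → R⧸M^(k+2)
      have hker : (M : Submodule R R) ≤ LinearMap.ker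
          ((Submodule.mkQ (M ^ (k + 2) : Ideal R)).comp
            (LinearMap.toSpanSingleton R R (t ^ (k + 1)))) := by
        intro c hcM
        simp only [LinearMap.mem_ker, LinearMap.comp_apply,
          LinearMap.toSpanSingleton_apply, Submodule.mkQ_apply]
        rw [Submodule.Quotient.mk_eq_zero]
        rw [ht'] at hcM
        obtain ⟨d, hd⟩ := Ideal.mem_span_singleton'.mp hcM
        have : c • t ^ (k + 1) = d * t ^ (k + 2) := by
          rw [smul_eq_mul, ← hd]; ring
        rw [this]
        have : M ^ (k + 2) = Ideal.span {t ^ (k + 2)} := by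
          rw [ht', Ideal.span_singleton_pow]
        rw [this]
        exact Ideal.mem_span_singleton'.mpr ⟨d, rfl⟩
      set G : (R ⧸ M) →ₗ[R] (R ⧸ (M ^ (k + 2) : Ideal R)) :=
        Submodule.liftQ (M : Submodule R R) _ hker with hG
      have hfib0 : {y : R ⧸ (M ^ (k + 2) : Ideal R) | q y = 0}.Finite := by
        refine (Set.finite_range G).subset ?_
        rintro y hy
        obtain ⟨a, rfl⟩ := Ideal.Quotient.mk_surjective y
        have hy0 : Ideal.Quotient.mk (M ^ (k + 1)) a = 0 := by
          rw [← Ideal.Quotient.factor_mk hle a]; exact hy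
        have haM : a ∈ (M ^ (k + 1) : Ideal R) :=
          Ideal.Quotient.eq_zero_iff_mem.mp hy0
        have : (M ^ (k + 1) : Ideal R) = Ideal.span {t ^ (k + 1)} := by
          rw [ht', Ideal.span_singleton_pow]
        rw [this] at haM
        obtain ⟨c, hc⟩ := Ideal.mem_span_singleton'.mp haM
        refine ⟨Submodule.Quotient.mk c, ?_⟩
        rw [hG, Submodule.liftQ_apply]
        simp only [LinearMap.comp_apply, LinearMap.toSpanSingleton_apply, Submodule.mkQ_apply]
        rw [Ideal.Quotient.mk_eq_mk]
        exact congrArg _ (by rw [smul_eq_mul, hc])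
      have hfib : ∀ b, {y : R ⧸ (M ^ (k + 2) : Ideal R) | q y = b}.Finite := by
        intro b
        obtain ⟨a0, ha0⟩ := Ideal.Quotient.mk_surjective b
        set a : R ⧸ (M ^ (k + 2) : Ideal R) := Ideal.Quotient.mk _ a0 with ha
        refine (hfib0.image (fun y => a + y)).subset ?_
        intro x hx
        refine ⟨x - a, ?_, by ring⟩
        show q (x - a) = 0
        rw [map_sub, hx]
        have : q a = b := by rw [ha, hq, Ideal.Quotient.factor_mk, ha0]
        rw [this, sub_self]
      have huniv : (Set.univ : Set (R ⧸ (M ^ (k + 2) : Ideal R))).Finite := by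
        refine (Set.finite_iUnion hfib).subset ?_
        intro y _
        exact Set.mem_iUnion.mpr ⟨q y, rfl⟩
      exact Set.finite_univ_iff.mp huniv
  have hfe : Finite (R ⧸ (M ^ e : Ideal R)) := by
    obtain ⟨e', rfl⟩ : ∃ e', e = e' + 1 := ⟨e - 1, by omega⟩
    exact step e'
  have hinj : Function.Injective (Ideal.Quotient.mk (M ^ e)) := by
    rw [RingHom.injective_iff_ker_eq_bot, Ideal.mk_ker, hMe]
  exact Finite.of_injective _ hinj

lemma spir_exists_m (h : IsSPIR R M) :
    ∃ m : R, m ≠ 0 ∧ m * m = 0 ∧ ∀ r : R, r * m = 0 → r ∈ M := by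
  classical
  have : Nontrivial R := spir_nontrivial h
  obtain ⟨e0, he0, hMe0⟩ := h.2.2.2.2.2
  obtain ⟨t, ht⟩ := h.1.principal M
  have ht' : M = Ideal.span {t} := ht
  have hex : ∃ q, M ^ q = ⊥ := ⟨e0, hMe0⟩
  set e := Nat.find hex with he
  have hebot : M ^ e = ⊥ := Nat.find_spec hex
  have he2 : 2 ≤ e := by
    rcases Nat.lt_or_ge e 2 with h2 | h2
    · interval_cases e
      · rw [pow_zero, Ideal.one_eq_top] at hebot
        exact absurd (hebot ▸ (Submodule.mem_top : (1:R) ∈ (⊤ : Ideal R)))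
          (by simp)
      · rw [pow_one] at hebot
        exact absurd hebot h.2.2.2.1
    · exact h2
  have hprev : M ^ (e - 1) ≠ ⊥ := by
    intro hc
    have : Nat.find hex ≤ e - 1 := Nat.find_le hc
    omega
  refine ⟨t ^ (e - 1), ?_, ?_, ?_⟩
  · intro hm0
    apply hprev
    rw [ht', Ideal.span_singleton_pow, hm0, Ideal.span_singleton_eq_bot.mpr rfl]
  · have hte : t ^ e = 0 := by
      have htM : t ∈ M := ht' ▸ Ideal.mem_span_singleton_self t
      have : t ^ e ∈ M ^ e := Ideal.pow_mem_pow htM e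
      rwa [hebot, Ideal.mem_bot] at this
    have : t ^ (e - 1) * t ^ (e - 1) = t ^ e * t ^ (e - 2) := by
      rw [← pow_add, ← pow_add]
      congr 1
      omega
    rw [this, hte, zero_mul]
  · intro r hr
    by_contra hrM
    have hru := spir_isUnit h hrM
    obtain ⟨u, hu⟩ := hru
    have : t ^ (e - 1) = ↑u⁻¹ * (r * t ^ (e - 1)) := by
      rw [← mul_assoc, ← hu, Units.inv_mul, one_mul]
    rw [hr, mul_zero] at this
    apply hprev
    rw [ht', Ideal.span_singleton_pow, this, Ideal.span_singleton_eq_bot.mpr rfl]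

end Aux

def Ualg {R : Type*} [CommRing R] (m r : R) (hm2 : m * m = 0) :
    Subalgebra R (Fin 3 → R) where
  carrier := {y | ∃ a c : R, y = fun s => a + c * (![0, m, r * m] s)}
  mul_mem' := by
    rintro y y' ⟨a, c, rfl⟩ ⟨a', c', rfl⟩
    refine ⟨a * a', a * c' + c * a', ?_⟩
    funext s
    have hv : (![0, m, r * m] s) * (![0, m, r * m] s) = 0 := by
      fin_cases s
      · simp
      · simpa using hm2
      · show (r * m) * (r * m) = 0
        linear_combination r * r * hm2
    show (a + c * _) * (a' + c' * _) = _
    linear_combination c * c' * hv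
  add_mem' := by
    rintro y y' ⟨a, c, rfl⟩ ⟨a', c', rfl⟩
    exact ⟨a + a', c + c', by funext s; show (a + c * _) + (a' + c' * _) = _; ring⟩
  algebraMap_mem' := fun r0 => ⟨r0, 0, by funext s; simp⟩
  one_mem' := ⟨1, 0, by funext s; simp⟩
  zero_mem' := ⟨0, 0, by funext s; simp⟩


/-- Let `(R, M)` be a ΣPIR (an infinite SPIR), `1 < p < n`, and `φ : R^p → R^n` an injective
`R`-algebra homomorphism. If `n = p + 1` then the extension `φ` has FIP (the set of
`R`-subalgebras of `R^n` containing `φ(R^p)` is finite); if `n ≥ 2p + 1`, it does not. -/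
theorem fip_power_extension_sigma_pir (R : Type*) [CommRing R] (M : Ideal R)
    (hspir : IsSPIR R M) (hinf : Infinite R) (p n : ℕ) (hp : 1 < p) (hpn : p < n)
    (φ : (Fin p → R) →ₐ[R] (Fin n → R)) (hφ : Function.Injective φ) :
    (n = p + 1 → Finite {T : Subalgebra R (Fin n → R) // φ.range ≤ T}) ∧
      (2 * p + 1 ≤ n → ¬ Finite {T : Subalgebra R (Fin n → R) // φ.range ≤ T}) := by
  classical
  have hnontriv : Nontrivial R := spir_nontrivial hspir
  obtain ⟨σ, hσ, hsurj⟩ := spir_exists_sigma hspir φ hφ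
  constructor
  · -- case n = p + 1
    intro hn
    obtain ⟨i0, j0, hne, hσij⟩ := Fintype.exists_ne_map_eq_of_card_lt σ
      (by simp [hn])
    have hsurj' : Function.Surjective (fun x : {z : Fin n // z ≠ j0} => σ x.1) := by
      intro i
      obtain ⟨j, hj⟩ := hsurj i
      by_cases hjj : j = j0
      · exact ⟨⟨i0, hne⟩, by show σ i0 = i; rw [hσij, ← hjj, hj]⟩
      · exact ⟨⟨j, hjj⟩, hj⟩
    have hcard : Fintype.card {z : Fin n // z ≠ j0} = Fintype.card (Fin p) := by
      simp only [Fintype.card_subtype_compl, Fintype.card_subtype_eq, Fintype.card_fin, hn]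
      omega
    have hbij := (Fintype.bijective_iff_surjective_and_card
      (fun x : {z : Fin n // z ≠ j0} => σ x.1)).mpr ⟨hsurj', hcard⟩
    have hinj : ∀ a b : Fin n, a ≠ j0 → b ≠ j0 → σ a = σ b → a = b := by
      intro a b ha hb hab
      have : (⟨a, ha⟩ : {z : Fin n // z ≠ j0}) = ⟨b, hb⟩ := hbij.1 hab
      exact congrArg Subtype.val this
    have hkey : ∀ x : Fin n → R, x i0 = x j0 → x ∈ φ.range := by
      intro x hx
      rw [spir_mem_range hspir φ hσ hsurj]
      intro a b hab
      by_cases ha : a = j0 <;> by_cases hb : b = j0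
      · rw [ha, hb]
      · have hbi : b = i0 := hinj b i0 hb hne (by rw [← hab, ha, hσij])
        rw [ha, hbi, ← hx]
      · have hai : a = i0 := hinj a i0 ha hne (by rw [hab, hb, hσij])
        rw [hai, hb, hx]
      · rw [hinj a b ha hb hab]
    set L : (Fin n → R) →ₗ[R] R :=
      (LinearMap.proj i0 : (Fin n → R) →ₗ[R] R) -
        (LinearMap.proj j0 : (Fin n → R) →ₗ[R] R) with hL
    have hLapp : ∀ x : Fin n → R, L x = x i0 - x j0 := by
      intro x; simp [hL, LinearMap.sub_apply, LinearMap.proj_apply]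
    have hIfin : Finite (Ideal R) := spir_finite_ideals hspir
    have main : ∀ S S' : Subalgebra R (Fin n → R), φ.range ≤ S' →
        Submodule.map L (Subalgebra.toSubmodule S) =
          Submodule.map L (Subalgebra.toSubmodule S') → S ≤ S' := by
      intro S S' hS' hmap x hxS
      have hx : L x ∈ Submodule.map L (Subalgebra.toSubmodule S') :=
        hmap ▸ ⟨x, hxS, rfl⟩
      obtain ⟨y, hyS', hyx⟩ := hx
      have hd : (x - y) i0 = (x - y) j0 := by
        have h1 : y i0 - y j0 = x i0 - x j0 := by
          rw [← hLapp, ← hLapp, hyx]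
        simp only [Pi.sub_apply]
        linear_combination -h1
      have hxy : x - y ∈ S' := hS' (hkey (x - y) hd)
      have hxe : x = (x - y) + y := by ring
      rw [hxe]
      exact S'.add_mem hxy hyS'
    refine Finite.of_injective
      (fun T : {T : Subalgebra R (Fin n → R) // φ.range ≤ T} =>
        Submodule.map L (Subalgebra.toSubmodule T.1)) ?_
    rintro ⟨T, hT⟩ ⟨T', hT'⟩ hTT
    simp only at hTT
    exact Subtype.ext (le_antisymm (main T T' hT' hTT) (main T' T hT hTT.symm))
  · -- case 2p + 1 ≤ n
    intro hn hfin
    obtain ⟨m, hm0, hm2, hann⟩ := spir_exists_m hspir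
    have hqinf : Infinite (R ⧸ M) := by
      rw [← not_finite_iff_infinite]
      intro hq
      haveI := spir_finite_of_quot hspir hq
      exact not_finite R
    obtain ⟨y0, hy0⟩ := Fintype.exists_lt_card_fiber_of_mul_lt_card σ (n := 2)
      (by simp only [Fintype.card_fin]; omega)
    set s : Finset (Fin n) := Finset.univ.filter (fun x => σ x = y0) with hs
    have hscard : 2 < s.card := hy0
    have hsσ : ∀ a ∈ s, σ a = y0 := fun a ha => (Finset.mem_filter.mp ha).2
    obtain ⟨i, hi⟩ := Finset.card_pos.mp (by omega : 0 < s.card)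
    have h2 : 1 < (s.erase i).card := by
      rw [Finset.card_erase_of_mem hi]; omega
    obtain ⟨j, hj, k, hk, hjk⟩ := Finset.one_lt_card.mp h2
    have hji : j ≠ i := (Finset.mem_erase.mp hj).1
    have hki : k ≠ i := (Finset.mem_erase.mp hk).1
    have hjs : j ∈ s := (Finset.mem_erase.mp hj).2
    have hks : k ∈ s := (Finset.mem_erase.mp hk).2
    set π : (Fin n → R) →ₐ[R] (Fin 3 → R) :=
      Pi.algHom R (fun _ : Fin 3 => R)
        (fun s' => Pi.evalAlgHom R (fun _ => R) (![i, j, k] s')) with hπ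
    have hπapp : ∀ x (s' : Fin 3), π x s' = x (![i, j, k] s') := fun _ _ => rfl
    have hrange : ∀ r : R, φ.range ≤ (Ualg m r hm2).comap π := by
      rintro r _ ⟨z, rfl⟩
      show π (φ z) ∈ Ualg m r hm2
      refine ⟨z y0, 0, ?_⟩
      funext s'
      rw [hπapp]
      have hzz : φ z (![i, j, k] s') = z y0 := by
        rw [hσ]
        congr 1
        fin_cases s'
        · exact hsσ i hi
        · exact hsσ j hjs
        · exact hsσ k hks
      rw [hzz]; ring
    set F : (R ⧸ M) → {T : Subalgebra R (Fin n → R) // φ.range ≤ T} :=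
      fun b => ⟨(Ualg m (Quotient.out b) hm2).comap π, hrange _⟩ with hF
    have hout : ∀ b : R ⧸ M, (Submodule.Quotient.mk (Quotient.out b) : R ⧸ M) = b :=
      fun b => Quotient.out_eq b
    have hFinj : Function.Injective F := by
      intro b b' hbb
      set r := Quotient.out b with hr
      set r' := Quotient.out b' with hr'
      have hTT : (Ualg m r hm2).comap π = (Ualg m r' hm2).comap π := by
        simpa [hF] using Subtype.ext_iff.mp hbb
      set xh : Fin n → R := fun b0 => if b0 = i then 0 else if b0 = j then m
        else if b0 = k then r * m else 0 with hxh
      have hπx : π xh = fun s' => 0 + 1 * (![0, m, r * m] s') := by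
        funext s'
        rw [hπapp]
        fin_cases s'
        · show xh i = 0 + 1 * 0
          simp [hxh]
        · show xh j = 0 + 1 * m
          simp [hxh, hji]
        · show xh k = 0 + 1 * (r * m)
          simp [hxh, hki, Ne.symm hjk]
      have hxmem : xh ∈ (Ualg m r hm2).comap π := ⟨0, 1, hπx⟩
      rw [hTT] at hxmem
      obtain ⟨a, c, hac⟩ := hxmem
      replace hac := hπx.symm.trans hac
      have h0 : (0 : R) + 1 * 0 = a + c * 0 := congrFun hac 0
      have h1 : (0 : R) + 1 * m = a + c * m := congrFun hac 1
      have h2' : (0 : R) + 1 * (r * m) = a + c * (r' * m) := congrFun hac 2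
      have ha0 : a = (0 : R) := by linear_combination -h0
      have hcm : c * m = m := by linear_combination -h1 - ha0
      have hrm : r * m = r' * m := by linear_combination h2' + r' * hcm + ha0
      have hMm : r - r' ∈ M := hann _ (by linear_combination hrm)
      have hqq := (Submodule.Quotient.eq M).mpr hMm
      rw [hout, hout] at hqq
      exact hqq
    have : Infinite {T : Subalgebra R (Fin n → R) // φ.range ≤ T} :=
      Infinite.of_injective F hFinj
    exact absurd hfin (by rw [not_finite_iff_infinite]; exact this)
end

section
/- Let M be a module over a commutative ring R. Then the extension R ⊆ R(+)M has FIP if and only if M is an FMS module (M has only finitely many R-submodules). In this case, |[R, R(+)M]| = ν(M), the number of R-submodules of M. -/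
open TrivSqZeroExt
def subalgOf (R M : Type*) [CommRing R] [AddCommGroup M] [Module R M]
    [Module Rᵐᵒᵖ M] [IsCentralScalar R M] (N : Submodule R M) :
    Subalgebra R (TrivSqZeroExt R M) where
  carrier := {x | x.snd ∈ N}
  mul_mem' := by
    rintro a b (ha : a.snd ∈ N) (hb : b.snd ∈ N)
    show (a * b).snd ∈ N
    rw [snd_mul]
    exact N.add_mem (N.smul_mem _ hb) (by rw [op_smul_eq_smul]; exact N.smul_mem _ ha)
  add_mem' := by
    rintro a b (ha : a.snd ∈ N) (hb : b.snd ∈ N)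
    show (a + b).snd ∈ N
    rw [snd_add]; exact N.add_mem ha hb
  algebraMap_mem' := fun r => by
    show (algebraMap R (TrivSqZeroExt R M) r).snd ∈ N
    rw [algebraMap_eq_inl' R R M r, snd_inl]; exact N.zero_mem

theorem mem_subalgOf {R M : Type*} [CommRing R] [AddCommGroup M] [Module R M]
    [Module Rᵐᵒᵖ M] [IsCentralScalar R M] {N : Submodule R M} {x : TrivSqZeroExt R M} :
    x ∈ subalgOf R M N ↔ x.snd ∈ N := Iff.rfl

def submoduleSubalgebraEquiv (R M : Type*) [CommRing R] [AddCommGroup M] [Module R M]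
    [Module Rᵐᵒᵖ M] [IsCentralScalar R M] :
    Submodule R M ≃ Subalgebra R (TrivSqZeroExt R M) where
  toFun := subalgOf R M
  invFun S := (Subalgebra.toSubmodule S).comap (inrHom R M)
  left_inv N := by
    ext m
    rw [Submodule.mem_comap]
    show inrHom R M m ∈ subalgOf R M N ↔ m ∈ N
    rw [mem_subalgOf, inrHom_apply, snd_inr]
  right_inv S := by
    ext x
    rw [mem_subalgOf, Submodule.mem_comap]
    show inrHom R M x.snd ∈ S ↔ x ∈ S
    rw [inrHom_apply]
    constructor
    · intro hx
      have h1 : (inl x.fst : TrivSqZeroExt R M) ∈ S := S.algebraMap_mem x.fst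
      have h2 := S.add_mem h1 hx
      rwa [inl_fst_add_inr_snd_eq] at h2
    · intro hx
      have h1 : (inl x.fst : TrivSqZeroExt R M) ∈ S := S.algebraMap_mem x.fst
      have h2 := S.sub_mem hx h1
      have hx2 : inr x.snd = x - inl x.fst := by
        rw [eq_sub_iff_add_eq, add_comm, inl_fst_add_inr_snd_eq]
      rwa [hx2]

/-- Let `M` be a module over `R`. The extension `R ⊆ R(+)M` into the idealization of `M`
(the trivial square-zero extension) has FIP iff `M` has only finitely many `R`-submodules,
and in this case the number of intermediate `R`-algebras equals the number of
`R`-submodules of `M`. -/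
theorem fip_idealization_iff (R M : Type*) [CommRing R] [AddCommGroup M] [Module R M]
    [Module Rᵐᵒᵖ M] [IsCentralScalar R M] :
    (Finite (Subalgebra R (TrivSqZeroExt R M)) ↔ Finite (Submodule R M)) ∧
      (Finite (Submodule R M) →
        Nat.card (Subalgebra R (TrivSqZeroExt R M)) = Nat.card (Submodule R M)) := by
  have e := (submoduleSubalgebraEquiv R M).symm
  exact ⟨⟨fun _ => Finite.of_equiv _ e, fun _ => Finite.of_equiv _ e.symm⟩,
    fun _ => Nat.card_congr e⟩
end

section
/- Let (R,P) be a quasi-local ring and M an R-module, with C := (0:M). Then M is an FMS module if and only if the following two conditions hold: (1) M is finitely generated, and cyclic when the residue field R/P is infinite; (2) R/C is an FMIR. -/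
open Submodule IsLocalRing Function

section Aux

lemma aux_finite_of_submodule_quotient {S N : Type*} [Ring S] [AddCommGroup N] [Module S N]
    (p : Submodule S N) [Finite p] [Finite (N ⧸ p)] : Finite N := by
  have h1 : Finite (N ⧸ p.toAddSubgroup) := ‹Finite (N ⧸ p)›
  have h2 : Finite p.toAddSubgroup := ‹Finite p›
  exact Finite.of_equiv ((N ⧸ p.toAddSubgroup) × p.toAddSubgroup)
    (AddSubgroup.addGroupEquivQuotientProdAddSubgroup (s := p.toAddSubgroup)).symm

lemma aux_finite_of_simple {S : Type*} [CommRing S] [IsLocalRing S]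
    [Finite (S ⧸ maximalIdeal S)] {N : Type*} [AddCommGroup N] [Module S N]
    [IsSimpleModule S N] : Finite N := by
  obtain ⟨I, hI, ⟨e⟩⟩ := isSimpleModule_iff_quot_maximal.mp ‹IsSimpleModule S N›
  have hIe : I = maximalIdeal S := IsLocalRing.eq_maximalIdeal hI
  subst hIe
  exact Finite.of_equiv (S ⧸ maximalIdeal S) e.symm

lemma aux_finite_of_finiteLength {S : Type*} [CommRing S] [IsLocalRing S]
    [Finite (S ⧸ maximalIdeal S)] {N : Type*} [AddCommGroup N] [Module S N]
    (h : IsFiniteLength S N) : Finite N := by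
  induction h with
  | of_subsingleton => exact Finite.of_subsingleton
  | @of_simple_quotient M iM jM p hs hlen ih =>
    have h1 : Finite (M ⧸ p) := aux_finite_of_simple (S := S)
    have h2 : Finite p := ih
    exact aux_finite_of_submodule_quotient p

/-- A module with finitely many submodules over a local ring with finite residue field
is a finite set. -/
lemma aux_finite_module {S : Type*} [CommRing S] [IsLocalRing S]
    [Finite (S ⧸ maximalIdeal S)] {N : Type*} [AddCommGroup N] [Module S N]
    [Finite (Submodule S N)] : Finite N := by
  have h1 : IsNoetherian S N := isNoetherian_iff'.mpr inferInstance
  have h2 : IsArtinian S N := inferInstance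
  exact aux_finite_of_finiteLength (isFiniteLength_iff_isNoetherian_isArtinian.mpr ⟨h1, h2⟩)

end Aux

/-- Let `(R, P)` be a quasi-local ring, `M` an `R`-module and `C := (0:M)` its annihilator.
Then `M` has only finitely many `R`-submodules iff (1) `M` is finitely generated, and cyclic
when the residue field `R/P` is infinite, and (2) `R/C` has only finitely many ideals. -/
theorem fms_module_local_iff (R M : Type*) [CommRing R] [IsLocalRing R]
    [AddCommGroup M] [Module R M] :
    Finite (Submodule R M) ↔
      (Module.Finite R M ∧
          (Infinite (R ⧸ IsLocalRing.maximalIdeal R) →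
            ∃ e : M, Submodule.span R {e} = ⊤)) ∧
        Finite (Ideal (R ⧸ (⊤ : Submodule R M).annihilator)) := by
  constructor
  · intro hfin
    have hNoeth : IsNoetherian R M := isNoetherian_iff'.mpr inferInstance
    have hfg : Module.Finite R M := Module.finite_def.mpr (IsNoetherian.noetherian ⊤)
    have hcyc : Infinite (R ⧸ IsLocalRing.maximalIdeal R) → ∃ e : M, span R {e} = ⊤ := by
      intro hk
      by_contra hnc
      push_neg at hnc
      -- pass to V := M ⧸ (P • ⊤)
      set N : Submodule R M := IsLocalRing.maximalIdeal R • ⊤ with hN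
      haveI hVfin : Finite (Submodule R (M ⧸ N)) :=
        Finite.of_injective (comap N.mkQ) (comap_injective_of_surjective N.mkQ_surjective)
      have hkill : ∀ c ∈ IsLocalRing.maximalIdeal R, ∀ v : M ⧸ N, c • v = 0 := by
        intro c hc v
        obtain ⟨m, rfl⟩ := N.mkQ_surjective v
        rw [← map_smul, Submodule.mkQ_apply, Submodule.Quotient.mk_eq_zero]
        exact Submodule.smul_mem_smul hc mem_top
      have hVnc : ∀ v : M ⧸ N, span R {v} ≠ ⊤ := by
        intro v hv
        obtain ⟨m, rfl⟩ := N.mkQ_surjective v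
        refine hnc m ?_
        have htop : (⊤ : Submodule R M) ≤ span R {m} ⊔ N := by
          intro x _
          have hx : N.mkQ x ∈ span R {N.mkQ m} := hv ▸ mem_top
          obtain ⟨r, hr⟩ := mem_span_singleton.mp hx
          have hsub : x - r • m ∈ N := by
            rw [← Submodule.Quotient.eq]
            rw [← Submodule.mkQ_apply, ← Submodule.mkQ_apply, ← hr, map_smul]
          have : x = r • m + (x - r • m) := by abel
          rw [this]
          exact add_mem_sup (smul_mem _ r (mem_span_singleton_self m)) hsub
        have hle : (⊤ : Submodule R M) ≤ span R {m} :=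
          le_of_le_smul_of_le_jacobson_bot (Module.finite_def.mp hfg)
            (le_of_eq (jacobson_eq_maximalIdeal ⊥ bot_ne_top).symm) htop
        exact top_le_iff.mp hle
      haveI hVnt : Nontrivial (M ⧸ N) := by
        rcases subsingleton_or_nontrivial (M ⧸ N) with h | h
        · exact absurd (eq_top_iff'.mpr fun x => by
            rw [Subsingleton.elim x (0 : M ⧸ N)]; exact zero_mem _) (hVnc 0)
        · exact h
      obtain ⟨x, hx0⟩ := exists_ne (0 : M ⧸ N)
      obtain ⟨y, hy⟩ : ∃ y : M ⧸ N, y ∉ span R {x} := by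
        by_contra h
        push_neg at h
        exact hVnc x (eq_top_iff'.mpr h)
      have hwd : ∀ a b : R, Submodule.quotientRel (IsLocalRing.maximalIdeal R) a b →
          span R {x + a • y} = span R {x + b • y} := by
        intro a b hab
        have hab' : a - b ∈ IsLocalRing.maximalIdeal R :=
          (Submodule.quotientRel_def _).mp hab
        have hy0 : (a - b) • y = 0 := hkill _ hab' y
        rw [sub_smul, sub_eq_zero] at hy0
        rw [hy0]
      have hinj : Function.Injective fun q : R ⧸ IsLocalRing.maximalIdeal R =>
          Quotient.liftOn' q (fun a => span R {x + a • y}) hwd := by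
        intro q1 q2 hq
        refine Quotient.inductionOn₂' q1 q2 (fun a b hq => ?_) hq
        simp only [Quotient.liftOn'_mk''] at hq
        refine Quotient.sound' ((Submodule.quotientRel_def _).mpr ?_)
        by_contra hab
        have hmem : x + b • y ∈ span R {x + a • y} := hq ▸ mem_span_singleton_self _
        obtain ⟨r, hr⟩ := mem_span_singleton.mp hmem
        have key : (1 - r) • x = (r * a - b) • y := by
          rw [smul_add, ← mul_smul] at hr
          rw [sub_smul, sub_smul, one_smul, sub_eq_sub_iff_add_eq_add, ← hr]
          abel
        by_cases hrb : r * a - b ∈ IsLocalRing.maximalIdeal R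
        · have hx00 : (1 - r) • x = 0 := by rw [key, hkill _ hrb]
          have h1r : (1 : R) - r ∉ IsLocalRing.maximalIdeal R := by
            intro h1r
            have : a - b = (r * a - b) + (1 - r) * a := by ring
            exact hab (this ▸ add_mem hrb (Ideal.mul_mem_right _ _ h1r))
          have hu : IsUnit ((1 : R) - r) := by
            by_contra h
            exact h1r ((IsLocalRing.mem_maximalIdeal _).mpr (mem_nonunits_iff.mpr h))
          apply hx0
          calc x = (↑hu.unit⁻¹ * (1 - r)) • x := by
                rw [IsUnit.val_inv_mul, one_smul]
            _ = (↑hu.unit⁻¹ : R) • ((1 - r) • x) := by rw [mul_smul]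
            _ = 0 := by rw [hx00, smul_zero]
        · have hu : IsUnit (r * a - b) := by
            by_contra h
            exact hrb ((IsLocalRing.mem_maximalIdeal _).mpr (mem_nonunits_iff.mpr h))
          apply hy
          apply mem_span_singleton.mpr
          refine ⟨↑hu.unit⁻¹ * (1 - r), ?_⟩
          rw [mul_smul, key, ← mul_smul, IsUnit.val_inv_mul, one_smul]
      haveI : Infinite (Submodule R (M ⧸ N)) := Infinite.of_injective _ hinj
      exact not_finite (Submodule R (M ⧸ N))
    refine ⟨⟨hfg, hcyc⟩, ?_⟩
    rcases finite_or_infinite (R ⧸ IsLocalRing.maximalIdeal R) with hk | hk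
    · -- finite residue field: M is a finite set, hence R ⧸ C is finite
      haveI hMfin : Finite M := aux_finite_module (S := R) (N := M)
      have hwd : ∀ a b : R, Submodule.quotientRel ((⊤ : Submodule R M).annihilator) a b →
          (fun m : M => a • m) = (fun m : M => b • m) := by
        intro a b hab
        funext m
        have hab' : a - b ∈ (⊤ : Submodule R M).annihilator :=
          (Submodule.quotientRel_def _).mp hab
        have := Submodule.mem_annihilator.mp hab' m mem_top
        rw [sub_smul, sub_eq_zero] at this
        exact this
      have hinj : Function.Injective
          fun q : R ⧸ (⊤ : Submodule R M).annihilator =>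
            Quotient.liftOn' q (fun a => (fun m : M => a • m)) hwd := by
        intro q1 q2 hq
        refine Quotient.inductionOn₂' q1 q2 (fun a b hq => ?_) hq
        simp only [Quotient.liftOn'_mk''] at hq
        refine Quotient.sound' ((Submodule.quotientRel_def _).mpr ?_)
        refine Submodule.mem_annihilator.mpr fun m _ => ?_
        rw [sub_smul, congrFun hq m, sub_self]
      haveI : Finite (R ⧸ (⊤ : Submodule R M).annihilator) :=
        Finite.of_injective _ hinj
      exact Finite.of_injective
        (fun I : Ideal (R ⧸ (⊤ : Submodule R M).annihilator) => (I : Set (R ⧸ (⊤ : Submodule R M).annihilator)))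
        (fun _ _ h => SetLike.coe_injective h)
    · -- infinite residue field: M is cyclic, submodules ↔ ideals
      obtain ⟨e, he⟩ := hcyc hk
      set f := LinearMap.toSpanSingleton R M e with hf
      have hker : LinearMap.ker f ≤ (⊤ : Submodule R M).annihilator := by
        intro r hr
        refine Submodule.mem_annihilator.mpr fun m _ => ?_
        obtain ⟨s, rfl⟩ := mem_span_singleton.mp (he ▸ (mem_top : m ∈ ⊤))
        have hre : r • e = 0 := hr
        rw [smul_comm, hre, smul_zero]
      refine Finite.of_injective (fun I : Ideal (R ⧸ (⊤ : Submodule R M).annihilator) =>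
        Submodule.map f (Ideal.comap (Ideal.Quotient.mk _) I)) ?_
      intro I J h
      have hCle : ∀ K : Ideal (R ⧸ (⊤ : Submodule R M).annihilator),
          LinearMap.ker f ≤ Ideal.comap (Ideal.Quotient.mk _) K := fun K => by
        refine le_trans hker ?_
        intro c hc
        have : Ideal.Quotient.mk ((⊤ : Submodule R M).annihilator) c = 0 :=
          Ideal.Quotient.eq_zero_iff_mem.mpr hc
        simp only [Ideal.mem_comap, this]
        exact K.zero_mem
      have h2 := congrArg (Submodule.comap f) h
      rw [Submodule.comap_map_eq, Submodule.comap_map_eq,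
        sup_of_le_left (hCle I), sup_of_le_left (hCle J)] at h2
      exact Ideal.comap_injective_of_surjective _ Ideal.Quotient.mk_surjective h2
  · rintro ⟨⟨hfg, hcyc⟩, hFMIR⟩
    rcases finite_or_infinite (R ⧸ IsLocalRing.maximalIdeal R) with hk | hk
    · -- finite residue field: show M is a finite set
      rcases subsingleton_or_nontrivial M with hM | hM
      · haveI : Finite M := Finite.of_subsingleton
        exact Finite.of_injective (fun N : Submodule R M => (N : Set M))
          SetLike.coe_injective
      · set C := (⊤ : Submodule R M).annihilator with hCdef
        have hC_ne : C ≠ ⊤ := by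
          intro h
          obtain ⟨m, hm⟩ := exists_ne (0 : M)
          have : (1 : R) ∈ C := h ▸ Submodule.mem_top
          have := Submodule.mem_annihilator.mp this m mem_top
          rw [one_smul] at this
          exact hm this
        haveI : Nontrivial (R ⧸ C) := Ideal.Quotient.nontrivial_iff.mpr hC_ne
        haveI : IsLocalRing (R ⧸ C) :=
          IsLocalRing.of_surjective' (Ideal.Quotient.mk C) Ideal.Quotient.mk_surjective
        have hmax : maximalIdeal (R ⧸ C) =
            Ideal.map (Ideal.Quotient.mk C) (IsLocalRing.maximalIdeal R) := by
          have h1 : (Ideal.comap (Ideal.Quotient.mk C) (maximalIdeal (R ⧸ C))).IsMaximal :=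
            Ideal.comap_isMaximal_of_surjective _ Ideal.Quotient.mk_surjective
          have h2 := IsLocalRing.eq_maximalIdeal h1
          conv_lhs => rw [← Ideal.map_comap_of_surjective _ Ideal.Quotient.mk_surjective
            (maximalIdeal (R ⧸ C)), h2]
        haveI : Finite ((R ⧸ C) ⧸ maximalIdeal (R ⧸ C)) := by
          rw [hmax]
          exact Finite.of_equiv (R ⧸ IsLocalRing.maximalIdeal R)
            (DoubleQuot.quotQuotEquivQuotOfLE (le_maximalIdeal hC_ne)).symm.toEquiv
        haveI : Finite (Submodule (R ⧸ C) (R ⧸ C)) := hFMIR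
        haveI : Finite (R ⧸ C) := aux_finite_module (S := R ⧸ C) (N := R ⧸ C)
        have htor : Module.IsTorsionBySet R M (C : Set R) := by
          intro x c
          exact Submodule.mem_annihilator.mp c.2 x mem_top
        letI : Module (R ⧸ C) M := htor.module
        haveI : IsScalarTower R (R ⧸ C) M := htor.isScalarTower
        haveI : Module.Finite (R ⧸ C) M :=
          Module.Finite.of_restrictScalars_finite R (R ⧸ C) M
        haveI : Finite M := Module.finite_of_finite (R ⧸ C)
        exact Finite.of_injective (fun N : Submodule R M => (N : Set M))
          SetLike.coe_injective
    · -- infinite residue field: M is cyclic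
      obtain ⟨e, he⟩ := hcyc hk
      set f := LinearMap.toSpanSingleton R M e with hf
      have hsurj : Function.Surjective f := by
        rw [← LinearMap.range_eq_top, ← LinearMap.span_singleton_eq_range, he]
      have hCle : ∀ N : Submodule R M,
          RingHom.ker (Ideal.Quotient.mk ((⊤ : Submodule R M).annihilator)) ≤
            Submodule.comap f N := by
        intro N c hc
        rw [Ideal.mk_ker] at hc
        have : f c = 0 := Submodule.mem_annihilator.mp hc e mem_top
        simp only [Submodule.mem_comap, this]
        exact N.zero_mem
      refine Finite.of_injective (fun N : Submodule R M =>
        Ideal.map (Ideal.Quotient.mk ((⊤ : Submodule R M).annihilator))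
          (Submodule.comap f N)) ?_
      intro N1 N2 h
      have h2 := congrArg (Ideal.comap
        (Ideal.Quotient.mk ((⊤ : Submodule R M).annihilator))) h
      rw [Ideal.comap_map_of_surjective _ Ideal.Quotient.mk_surjective,
        Ideal.comap_map_of_surjective _ Ideal.Quotient.mk_surjective] at h2
      have hbot : Ideal.comap (Ideal.Quotient.mk ((⊤ : Submodule R M).annihilator))
          (⊥ : Ideal (R ⧸ (⊤ : Submodule R M).annihilator)) =
          RingHom.ker (Ideal.Quotient.mk ((⊤ : Submodule R M).annihilator)) := rfl
      rw [hbot, sup_of_le_left (hCle N1), sup_of_le_left (hCle N2)] at h2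
      exact Submodule.comap_injective_of_surjective hsurj h2
end

section
/- Let R be a commutative ring. Then every finitely generated R-module is an FMS module (has only finitely many R-submodules) if and only if R is a finite ring. -/
universe u

/-- Every finitely generated module over a commutative ring `R` has only finitely many
`R`-submodules if and only if `R` is a finite ring. -/
theorem forall_fg_fms_iff_finite (R : Type u) [CommRing R] :
    (∀ (M : Type u) [AddCommGroup M] [Module R M],
        Module.Finite R M → Finite (Submodule R M)) ↔ Finite R := by
  constructor
  · intro h
    have hfin : Finite (Submodule R (R × R)) := h (R × R) inferInstance
    have hinj : Function.Injective (fun a : R => Submodule.span R {((1 : R), a)}) := by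
      intro a b hab
      have hb : ((1 : R), b) ∈ Submodule.span R {((1 : R), a)} := by
        simp only [] at hab; rw [show Submodule.span R {((1:R), a)} = Submodule.span R {((1:R), b)} from hab]; exact Submodule.mem_span_singleton_self _
      rw [Submodule.mem_span_singleton] at hb
      obtain ⟨r, hr⟩ := hb
      have h1 : r * 1 = 1 := congrArg Prod.fst hr
      have h2 : r * a = b := congrArg Prod.snd hr
      rw [mul_one] at h1
      rw [h1, one_mul] at h2
      exact h2
    exact Finite.of_injective _ hinj
  · intro hR M _ _ hM
    have : Finite M := Module.finite_of_finite R
    exact Finite.of_injective (fun N : Submodule R M => (N : Set M)) SetLike.coe_injective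
end
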